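/- arXiv:0811.3917 — 4 statements merged into one kernel-verified Lean document; each statement's English description precedes it below -/
import Mathlib

section
/- Let (X, μ, T) be a dynamical system with X 0-dimensional. Let A ⊂ X be a clopen subset and let μ(A) = Σ_{i=1}^∞ a_i with a_i > 0 for all i. Then there exists an inessential reduction X' ⊂ X and a partition A ∩ X' = ⨆_{i=1}^∞ A_i of A ∩ X' into pairwise disjoint subsets A_i which are relatively clopen in X' and satisfy μ(A_i) = a_i for all i. -/
open MeasureTheory Topology

/-- `X` is 0-dimensional: it has a countable base of clopen sets. -/
def ZeroDimensional (X : Type*) [TopologicalSpace X] : Prop :=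
  ∃ b : Set (Set X), b.Countable ∧ (∀ s ∈ b, IsClopen s) ∧
    TopologicalSpace.IsTopologicalBasis b

/-- A dynamical system: a non-atomic Borel probability measure of full support on a
topological space together with an ergodic non-singular homeomorphism whose
Radon–Nikodym derivative `d(μ∘T)/dμ` has the continuous version `ω`. -/
structure DynSys (X : Type*) [TopologicalSpace X] [MeasurableSpace X] where
  μ : Measure X
  T : X ≃ₜ X
  ω : X → ℝ
  prob : IsProbabilityMeasure μ
  noAtoms : NoAtoms μ
  fullSupport : ∀ U : Set X, IsOpen U → U.Nonempty → 0 < μ U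
  ergodic : ∀ A : Set X, MeasurableSet A → (⇑T) ⁻¹' A = A → μ A = 0 ∨ μ A = 1
  ωCont : Continuous ω
  ωPos : ∀ x, 0 < ω x
  rnDeriv : Measure.map (⇑T.symm) μ = μ.withDensity (fun x => ENNReal.ofReal (ω x))

namespace DynSys

variable {X Y : Type*} [TopologicalSpace X] [MeasurableSpace X]
  [TopologicalSpace Y] [MeasurableSpace Y]

/-- The iterate `Tⁿ` for `n : ℤ`. -/
noncomputable def iter (D : DynSys X) (n : ℤ) (x : X) : X :=
  (D.T.toEquiv ^ n) x

/-- The Radon–Nikodym cocycle `ρ_μ(x, Tⁿx)`. -/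
noncomputable def rho (D : DynSys X) (x : X) (n : ℤ) : ℝ :=
  if 0 ≤ n then ∑ i ∈ Finset.range n.toNat, Real.log (D.ω (D.iter (i : ℤ) x))
  else - ∑ i ∈ Finset.range (-n).toNat, Real.log (D.ω (D.iter (i : ℤ) (D.iter n x)))

/-- An inessential reduction: a `T`-invariant dense `G_δ` subset of full measure. -/
def InessRed (D : DynSys X) (X' : Set X) : Prop :=
  (⇑D.T) ⁻¹' X' = X' ∧ Dense X' ∧ IsGδ X' ∧ D.μ X' = 1

/-- A set is virtually clopen if its intersection with some inessential reduction `X'`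
is relatively clopen in `X'`. -/
def VirtClopen (D : DynSys X) (A : Set X) : Prop :=
  ∃ X' : Set X, D.InessRed X' ∧ IsClopen (Subtype.val ⁻¹' A : Set X')

/-- The asymptotic range `r(ρ_μ)` of the Radon–Nikodym cocycle. -/
def asymRange (D : DynSys X) : Set ℝ :=
  {t | ∀ ε : ℝ, 0 < ε → ∀ A : Set X, MeasurableSet A → 0 < D.μ A →
    ∃ k : ℤ, k ≠ 0 ∧ ∃ B : Set X, MeasurableSet B ∧ B ⊆ A ∧ 0 < D.μ B ∧
      ∀ x ∈ B, |D.rho x k - t| < ε}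

/-- The topological asymptotic range `r_top(ρ_μ)` of the Radon–Nikodym cocycle. -/
def topAsymRange (D : DynSys X) : Set ℝ :=
  {t | ∀ ε : ℝ, 0 < ε → ∀ A : Set X, D.VirtClopen A → 0 < D.μ A →
    ∃ k : ℤ, k ≠ 0 ∧ ∃ B : Set X, B ⊆ A ∧ 0 < D.μ B ∧
      ∀ x ∈ B, |D.rho x k - t| < ε}

/-- Type `III`: there is no equivalent σ-finite `T`-invariant measure. -/
def TypeIII (D : DynSys X) : Prop :=
  ¬ ∃ ν : Measure X, SigmaFinite ν ∧ ν ≪ D.μ ∧ D.μ ≪ ν ∧ Measure.map (⇑D.T) ν = ν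

/-- Almost continuous orbit equivalence of two dynamical systems. -/
def ACOE (D : DynSys X) (E : DynSys Y) : Prop :=
  ∃ (X₀ : Set X) (Y₀ : Set Y) (φ : X → Y) (ψ : Y → X),
    D.InessRed X₀ ∧ E.InessRed Y₀ ∧
    Set.BijOn φ X₀ Y₀ ∧ ContinuousOn φ X₀ ∧ ContinuousOn ψ Y₀ ∧ Set.InvOn ψ φ X₀ Y₀ ∧
    (∀ x ∈ X₀, φ '' {z | ∃ k : ℤ, z = D.iter k x} = {w | ∃ k : ℤ, w = E.iter k (φ x)}) ∧
    (∃ f : Y → ℝ, ContinuousOn f Y₀ ∧ (∀ y ∈ Y₀, 0 < f y) ∧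
      ∀ A : Set Y, MeasurableSet A →
        D.μ (φ ⁻¹' A ∩ X₀) = ∫⁻ y in A, ENNReal.ofReal (f y) ∂E.μ) ∧
    (∃ n m : X → ℤ, ContinuousOn n X₀ ∧ ContinuousOn m X₀ ∧
      ∀ x ∈ X₀, φ (D.T x) = E.iter (n x) (φ x) ∧ E.T (φ x) = φ (D.iter (m x) x))

end DynSys

/-- An `r`-uniform subrelation of `R_T` on the clopen set `C`, with fundamental
(clopen) subset `B` and splitting homeomorphism `(i, b) ↦ h i b : I_r × B → C`,
each `h i` being given on `B` by `h i b = T^(a i b) b` with `a i` continuous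
(i.e. `h i` belongs to the topological full groupoid `[[T]]_top`);
`proj` and `idx` form the continuous inverse, `proj` being the associated projection. -/
structure UniformRel {X : Type*} [TopologicalSpace X] [MeasurableSpace X]
    (D : DynSys X) (r : ℕ) (C B : Set X) where
  rpos : 0 < r
  h : Fin r → X → X
  a : Fin r → X → ℤ
  clopenB : IsClopen B
  subB : B ⊆ C
  h_zero : ∀ b ∈ B, h ⟨0, rpos⟩ b = b
  h_eq : ∀ (i : Fin r), ∀ b ∈ B, h i b = D.iter (a i b) b
  a_cont : ∀ i : Fin r, ContinuousOn (a i) B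
  h_cont : ∀ i : Fin r, ContinuousOn (h i) B
  maps : ∀ i : Fin r, Set.MapsTo (h i) B C
  inj : ∀ (i j : Fin r), ∀ b ∈ B, ∀ b' ∈ B, h i b = h j b' → i = j ∧ b = b'
  proj : X → X
  idx : X → Fin r
  proj_cont : ContinuousOn proj C
  idx_cont : ContinuousOn idx C
  proj_mem : ∀ x ∈ C, proj x ∈ B
  h_proj : ∀ x ∈ C, h (idx x) (proj x) = x

section AuxLemmas

variable {X : Type*} [TopologicalSpace X] [MeasurableSpace X]

lemma DynSys.iter_zero (D : DynSys X) (x : X) : D.iter 0 x = x := by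
  simp [DynSys.iter]

lemma DynSys.iter_succ (D : DynSys X) (k : ℤ) (x : X) :
    D.iter (k + 1) x = D.iter k (D.T x) := by
  simp [DynSys.iter, zpow_add_one, Equiv.Perm.mul_apply]

lemma DynSys.iter_pred (D : DynSys X) (k : ℤ) (x : X) :
    D.iter (k - 1) x = D.iter k (D.T.symm x) := by
  simp [DynSys.iter, zpow_sub_one, Equiv.Perm.mul_apply, Equiv.Perm.inv_def]

lemma DynSys.iter_continuous (D : DynSys X) (k : ℤ) : Continuous (D.iter k) := by
  induction k using Int.induction_on with
  | zero =>
    have : D.iter 0 = id := funext fun x => D.iter_zero x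
    rw [this]; exact continuous_id
  | succ k ih =>
    have : D.iter (k + 1) = D.iter k ∘ ⇑D.T := funext fun x => D.iter_succ k x
    rw [this]; exact ih.comp D.T.continuous
  | pred k ih =>
    have : D.iter (-k - 1) = D.iter (-k) ∘ ⇑D.T.symm := funext fun x => D.iter_pred (-k) x
    rw [this]; exact ih.comp D.T.symm.continuous

variable [BorelSpace X]

lemma DynSys.null_Tsymm_preimage (D : DynSys X) {S : Set X} (hS : MeasurableSet S)
    (h : D.μ S = 0) : D.μ (⇑D.T.symm ⁻¹' S) = 0 := by
  rw [← Measure.map_apply D.T.symm.continuous.measurable hS, D.rnDeriv,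
    withDensity_apply _ hS, setLIntegral_measure_zero _ _ h]

lemma DynSys.null_T_preimage (D : DynSys X) {S : Set X} (hS : MeasurableSet S)
    (h : D.μ S = 0) : D.μ (⇑D.T ⁻¹' S) = 0 := by
  have hpre : MeasurableSet (⇑D.T ⁻¹' S) := D.T.continuous.measurable hS
  have h2 : ⇑D.T.symm ⁻¹' (⇑D.T ⁻¹' S) = S := by
    ext x; simp
  have h1 : ∫⁻ x in ⇑D.T ⁻¹' S, ENNReal.ofReal (D.ω x) ∂D.μ = 0 := by
    rw [← withDensity_apply _ hpre, ← D.rnDeriv,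
      Measure.map_apply D.T.symm.continuous.measurable hpre, h2, h]
  have h3 := (setLIntegral_eq_zero_iff hpre
    (ENNReal.continuous_ofReal.comp D.ωCont).measurable).1 h1
  have h5 : ∀ᵐ x ∂D.μ, x ∉ ⇑D.T ⁻¹' S := by
    filter_upwards [h3] with x hx
    intro hxS
    have h6 := hx hxS
    have h7 : (0:ENNReal) < ENNReal.ofReal (D.ω x) := ENNReal.ofReal_pos.2 (D.ωPos x)
    rw [Function.comp_apply] at h6
    exact absurd h6 (ne_of_gt h7)
  exact measure_eq_zero_iff_ae_notMem.2 h5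

lemma DynSys.iter_null (D : DynSys X) {S : Set X} (hS : MeasurableSet S)
    (h : D.μ S = 0) : ∀ k : ℤ, D.μ (D.iter k ⁻¹' S) = 0 := by
  intro k
  induction k using Int.induction_on with
  | zero =>
    have : D.iter 0 ⁻¹' S = S := by ext x; simp [D.iter_zero]
    rwa [this]
  | succ k ih =>
    have hcomp : D.iter (k + 1) ⁻¹' S = ⇑D.T ⁻¹' (D.iter k ⁻¹' S) := by
      ext x; simp [Set.mem_preimage, D.iter_succ]
    rw [hcomp]
    exact D.null_T_preimage ((D.iter_continuous k).measurable hS) ih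
  | pred k ih =>
    have hcomp : D.iter (-k - 1) ⁻¹' S = ⇑D.T.symm ⁻¹' (D.iter (-k) ⁻¹' S) := by
      ext x; simp [Set.mem_preimage, D.iter_pred]
    rw [hcomp]
    exact D.null_Tsymm_preimage ((D.iter_continuous (-k)).measurable hS) ih

end AuxLemmas

section Approx

variable {X : Type*} [TopologicalSpace X] [PolishSpace X] [MeasurableSpace X] [BorelSpace X]

lemma DynSys.clopen_approx (D : DynSys X) (hzd : ZeroDimensional X)
    {C : Set X} (hC : IsClopen C) {lo hi : ℝ} (h0 : 0 ≤ lo) (hlh : lo < hi)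
    (hloC : lo < (D.μ C).toReal) :
    ∃ E : Set X, IsClopen E ∧ E ⊆ C ∧ lo < (D.μ E).toReal ∧ (D.μ E).toReal < hi := by
  classical
  haveI := D.prob
  haveI := D.noAtoms
  letI := TopologicalSpace.upgradeIsCompletelyMetrizable X
  haveI : D.μ.OuterRegular := inferInstance
  obtain ⟨b, hbc, hbcl, hbas⟩ := hzd
  set t : ℝ := (lo + min hi (D.μ C).toReal) / 2 with ht
  have hμC_ne : D.μ C ≠ ⊤ := measure_ne_top _ _
  have hlomin : lo < min hi (D.μ C).toReal := lt_min hlh hloC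
  have hlt : lo < t := by rw [ht]; linarith
  have hth : t < hi := by
    have : t < min hi (D.μ C).toReal := by rw [ht]; linarith
    exact lt_of_lt_of_le this (min_le_left _ _)
  have htC : t < (D.μ C).toReal := by
    have : t < min hi (D.μ C).toReal := by rw [ht]; linarith
    exact lt_of_lt_of_le this (min_le_right _ _)
  have ht0 : 0 ≤ t := le_trans h0 hlt.le
  have hCne : C.Nonempty := by
    apply nonempty_of_measure_ne_zero (μ := D.μ)
    intro hz
    rw [hz, ENNReal.toReal_zero] at hloC
    linarith
  have hbne : b.Nonempty := by
    obtain ⟨x, hx⟩ := hCne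
    obtain ⟨v, hv, _, _⟩ := hbas.exists_subset_of_mem_open hx hC.isOpen
    exact ⟨v, hv⟩
  obtain ⟨e, he⟩ := hbc.exists_eq_range hbne
  have heb : ∀ j, e j ∈ b := fun j => he ▸ Set.mem_range_self j
  let seq : ℕ → Set X := fun j => Nat.rec (∅ : Set X)
    (fun j S => if D.μ (S ∪ (e j ∩ C)) ≤ ENNReal.ofReal t then S ∪ (e j ∩ C) else S) j
  have hseq_succ : ∀ j, seq (j + 1) =
      if D.μ (seq j ∪ (e j ∩ C)) ≤ ENNReal.ofReal t then seq j ∪ (e j ∩ C) else seq j :=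
    fun j => rfl
  have hclopen : ∀ j, IsClopen (seq j) ∧ seq j ⊆ C := by
    intro j
    induction j with
    | zero => exact ⟨isClopen_empty, Set.empty_subset _⟩
    | succ j ih =>
      rw [hseq_succ]
      split
      · exact ⟨ih.1.union ((hbcl _ (heb j)).inter hC),
          Set.union_subset ih.2 Set.inter_subset_right⟩
      · exact ih
  have hmono : Monotone seq := by
    apply monotone_nat_of_le_succ
    intro j
    rw [hseq_succ]
    split
    · exact Set.subset_union_left
    · exact le_rfl
  have hbound : ∀ j, D.μ (seq j) ≤ ENNReal.ofReal t := by
    intro j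
    induction j with
    | zero =>
      rw [show seq 0 = (∅ : Set X) from rfl]
      simp
    | succ j ih =>
      rw [hseq_succ]
      split
      · assumption
      · exact ih
  set U := ⋃ j, seq j with hU
  have hUm : D.μ U = ⨆ j, D.μ (seq j) := (hmono.directed_le).measure_iUnion
  have hUle : D.μ U ≤ ENNReal.ofReal t := by rw [hUm]; exact iSup_le hbound
  have hUne : D.μ U ≠ ⊤ := measure_ne_top _ _
  have hUge : ENNReal.ofReal t ≤ D.μ U := by
    by_contra hlt'
    push_neg at hlt'
    have hu : (D.μ U).toReal < t := (ENNReal.lt_ofReal_iff_toReal_lt hUne).1 hlt'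
    have hCU : C ⊆ U := by
      intro x hx
      have hδ : (0 : ℝ) < t - (D.μ U).toReal := by linarith
      obtain ⟨O, hO1, hO2, hO3⟩ := Set.exists_isOpen_lt_of_lt (μ := D.μ) {x}
        (ENNReal.ofReal (t - (D.μ U).toReal))
        (by rw [D.noAtoms.measure_singleton x]; exact ENNReal.ofReal_pos.2 hδ)
      obtain ⟨B, hBb, hxB, hBsub⟩ := hbas.exists_subset_of_mem_open
        (Set.mem_inter (hO1 rfl) hx) (hO2.inter hC.isOpen)
      have : B ∈ Set.range e := he ▸ hBb
      obtain ⟨j, hj⟩ := this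
      have hBO : e j ∩ C ⊆ O := by
        rw [hj]; exact fun y hy => (hBsub hy.1).1
      have hcond : D.μ (seq j ∪ (e j ∩ C)) ≤ ENNReal.ofReal t := le_of_lt <| by
        calc D.μ (seq j ∪ (e j ∩ C)) ≤ D.μ (seq j) + D.μ (e j ∩ C) := measure_union_le _ _
          _ ≤ D.μ U + D.μ O :=
            add_le_add (measure_mono (Set.subset_iUnion seq j)) (measure_mono hBO)
          _ < D.μ U + ENNReal.ofReal (t - (D.μ U).toReal) :=
            ENNReal.add_lt_add_left hUne hO3
          _ = ENNReal.ofReal ((D.μ U).toReal) + ENNReal.ofReal (t - (D.μ U).toReal) := by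
            rw [ENNReal.ofReal_toReal hUne]
          _ = ENNReal.ofReal t := by
            rw [← ENNReal.ofReal_add ENNReal.toReal_nonneg hδ.le]
            ring_nf
      have hxj : x ∈ seq (j + 1) := by
        rw [hseq_succ, if_pos hcond]
        exact Or.inr ⟨hj ▸ hxB, hx⟩
      exact Set.mem_iUnion.2 ⟨j + 1, hxj⟩
    have h1 : D.μ C ≤ ENNReal.ofReal t := le_trans (measure_mono hCU) hUle
    have h2 : (D.μ C).toReal ≤ t := by
      have := ENNReal.toReal_mono ENNReal.ofReal_ne_top h1
      rwa [ENNReal.toReal_ofReal ht0] at this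
    linarith
  have hlosup : ENNReal.ofReal lo < ⨆ j, D.μ (seq j) := by
    rw [← hUm]
    exact lt_of_lt_of_le ((ENNReal.ofReal_lt_ofReal_iff (lt_of_le_of_lt h0 hlt)).2 hlt) hUge
  obtain ⟨j, hj⟩ := lt_iSup_iff.1 hlosup
  refine ⟨seq j, (hclopen j).1, (hclopen j).2, ?_, ?_⟩
  · exact (ENNReal.ofReal_lt_iff_lt_toReal h0 (measure_ne_top _ _)).1 hj
  · have := ENNReal.toReal_mono ENNReal.ofReal_ne_top (hbound j)
    rw [ENNReal.toReal_ofReal ht0] at this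
    linarith

end Approx

section Step

variable {X : Type*} [TopologicalSpace X] [PolishSpace X] [MeasurableSpace X] [BorelSpace X]

lemma DynSys.step_exists (D : DynSys X) (hzd : ZeroDimensional X) (n : ℕ)
    {K : Set X} {d : ℕ → ℝ} (hK : IsClopen K) (hd : ∀ i, 0 < d i)
    (hμ : D.μ K = ∑' i, ENNReal.ofReal (d i)) :
    ∃ K' : Set X, ∃ d' : ℕ → ℝ, IsClopen K' ∧ K' ⊆ K ∧ (∀ i, 0 < d' i) ∧
      D.μ K' = (∑' i, ENNReal.ofReal (d' i)) ∧
      (∀ i, i ≠ (Nat.unpair n).1 → d' i = d i) ∧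
      d' (Nat.unpair n).1 < d (Nat.unpair n).1 ∧
      d' (Nat.unpair n).1 < (1/2 : ℝ)^n ∧
      D.μ (K \ K') = ENNReal.ofReal (d (Nat.unpair n).1 - d' (Nat.unpair n).1) := by
  classical
  haveI := D.prob
  set b0 := (Nat.unpair n).1 with hb0
  have hKne : D.μ K ≠ ⊤ := measure_ne_top _ _
  set κ := (D.μ K).toReal with hκ
  have hdb : 0 < d b0 := hd b0
  have hdbκ : d b0 ≤ κ := by
    have h1 : ENNReal.ofReal (d b0) ≤ D.μ K := hμ ▸ ENNReal.le_tsum b0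
    have h2 := ENNReal.toReal_mono hKne h1
    rwa [ENNReal.toReal_ofReal hdb.le] at h2
  have hpow : (0:ℝ) < (1/2)^n := by positivity
  set ε := min ((1/2 : ℝ)^n) (d b0) / 2 with hε
  have hε0 : 0 < ε := by
    rw [hε]
    have := lt_min hpow hdb
    linarith
  have hεd : ε < d b0 := by
    rw [hε]
    have := min_le_right ((1/2 : ℝ)^n) (d b0)
    linarith
  have hεp : ε < (1/2 : ℝ)^n := by
    rw [hε]
    have := min_le_left ((1/2 : ℝ)^n) (d b0)
    linarith
  obtain ⟨K', hK'cl, hK'sub, h1, h2⟩ := D.clopen_approx hzd hK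
    (lo := κ - d b0) (hi := κ - d b0 + ε) (by linarith) (by linarith) (by linarith)
  have hK'ne : D.μ K' ≠ ⊤ := measure_ne_top _ _
  set κ' := (D.μ K').toReal with hκ'
  set m := κ - κ' with hm
  have hm1 : d b0 - ε < m := by rw [hm]; linarith
  have hm0 : 0 < m := by linarith
  have hmdb : m < d b0 := by rw [hm]; linarith
  set d' := Function.update d b0 (d b0 - m) with hd'
  have hd'b : d' b0 = d b0 - m := Function.update_self _ _ _
  have hd'ne : ∀ i, i ≠ b0 → d' i = d i := fun i hi => Function.update_of_ne hi _ _
  have hμK' : D.μ K' = ENNReal.ofReal κ' := (ENNReal.ofReal_toReal hK'ne).symm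
  have hμKR : D.μ K = ENNReal.ofReal κ := (ENNReal.ofReal_toReal hKne).symm
  have hdiff : D.μ (K \ K') = ENNReal.ofReal m := by
    rw [measure_diff hK'sub hK'cl.isClosed.measurableSet.nullMeasurableSet hK'ne, hμKR, hμK', hm,
      ENNReal.ofReal_sub _ ENNReal.toReal_nonneg]
  have hd'pos : ∀ i, 0 < d' i := by
    intro i
    by_cases h : i = b0
    · rw [h, hd'b]; linarith
    · rw [hd'ne i h]; exact hd i
  have hpoint : ∀ i, ENNReal.ofReal (d' i) + (if i = b0 then ENNReal.ofReal m else 0)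
      = ENNReal.ofReal (d i) := by
    intro i
    by_cases h : i = b0
    · rw [if_pos h, h, hd'b, ← ENNReal.ofReal_add (by linarith) hm0.le]
      ring_nf
    · rw [if_neg h, add_zero, hd'ne i h]
  have hsum2 : (∑' i, ENNReal.ofReal (d' i)) + ENNReal.ofReal m = ∑' i, ENNReal.ofReal (d i) := by
    calc (∑' i, ENNReal.ofReal (d' i)) + ENNReal.ofReal m
        = (∑' i, ENNReal.ofReal (d' i)) + ∑' i, (if i = b0 then ENNReal.ofReal m else 0) := by
          rw [tsum_ite_eq]
      _ = ∑' i, (ENNReal.ofReal (d' i) + if i = b0 then ENNReal.ofReal m else 0) :=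
          (ENNReal.tsum_add).symm
      _ = ∑' i, ENNReal.ofReal (d i) := tsum_congr hpoint
  have hfinal : D.μ K' = ∑' i, ENNReal.ofReal (d' i) := by
    have h5 : D.μ K' + ENNReal.ofReal m = (∑' i, ENNReal.ofReal (d' i)) + ENNReal.ofReal m := by
      calc D.μ K' + ENNReal.ofReal m = D.μ K' + D.μ (K \ K') := by rw [hdiff]
        _ = D.μ (K' ∪ K) := measure_add_diff hK'cl.isClosed.measurableSet.nullMeasurableSet K
        _ = D.μ K := by rw [Set.union_eq_self_of_subset_left hK'sub]
        _ = (∑' i, ENNReal.ofReal (d' i)) + ENNReal.ofReal m := by rw [hμ, ← hsum2]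
    have h6 : ENNReal.ofReal m + D.μ K' = ENNReal.ofReal m + (∑' i, ENNReal.ofReal (d' i)) := by
      rw [add_comm (ENNReal.ofReal m), add_comm (ENNReal.ofReal m)]
      exact h5
    exact (ENNReal.add_right_inj ENNReal.ofReal_ne_top).1 h6
  refine ⟨K', d', hK'cl, hK'sub, hd'pos, hfinal, hd'ne, ?_, ?_, ?_⟩
  · rw [hd'b]; linarith
  · rw [hd'b]; linarith
  · rw [hd'b]
    have : d b0 - (d b0 - m) = m := by ring
    rw [this]
    exact hdiff

end Step

/-- **Lemma 1.2.** A clopen set `A` with `μ(A) = Σ aᵢ`, `aᵢ > 0`, can be partitioned,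
on an inessential reduction, into relatively clopen sets of measures `aᵢ`. -/
theorem clopen_partition_prescribed_measures {X : Type*}
    [TopologicalSpace X] [PolishSpace X] [MeasurableSpace X] [BorelSpace X]
    (D : DynSys X) (hzd : ZeroDimensional X)
    (A : Set X) (hA : IsClopen A) (a : ℕ → ℝ) (ha : ∀ i, 0 < a i)
    (hsum : D.μ A = ∑' i, ENNReal.ofReal (a i)) :
    ∃ X' : Set X, D.InessRed X' ∧ ∃ P : ℕ → Set X,
      (∀ i j, i ≠ j → Disjoint (P i) (P j)) ∧
      (⋃ i, P i) = A ∩ X' ∧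
      (∀ i, IsClopen (Subtype.val ⁻¹' (P i) : Set X')) ∧
      (∀ i, D.μ (P i) = ENNReal.ofReal (a i)) := by
  classical
  haveI := D.prob
  -- summability of `a`
  have hμA_ne : D.μ A ≠ ⊤ := measure_ne_top _ _
  have hsum_ne : (∑' i, ENNReal.ofReal (a i)) ≠ ⊤ := hsum ▸ hμA_ne
  have hsumm : Summable a := by
    have h1 := ENNReal.summable_toReal hsum_ne
    have h2 : (fun i => (ENNReal.ofReal (a i)).toReal) = a :=
      funext fun i => ENNReal.toReal_ofReal (ha i).le
    rwa [h2] at h1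
  -- the inductive construction
  have hstep : ∀ (n : ℕ) (p : Set X × (ℕ → ℝ)),
      (IsClopen p.1 ∧ (∀ i, 0 < p.2 i) ∧ D.μ p.1 = ∑' i, ENNReal.ofReal (p.2 i)) →
      ∃ q : Set X × (ℕ → ℝ),
        (IsClopen q.1 ∧ (∀ i, 0 < q.2 i) ∧ D.μ q.1 = ∑' i, ENNReal.ofReal (q.2 i)) ∧
        q.1 ⊆ p.1 ∧ (∀ i, i ≠ (Nat.unpair n).1 → q.2 i = p.2 i) ∧
        q.2 (Nat.unpair n).1 < p.2 (Nat.unpair n).1 ∧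
        q.2 (Nat.unpair n).1 < (1/2 : ℝ)^n ∧
        D.μ (p.1 \ q.1) = ENNReal.ofReal (p.2 (Nat.unpair n).1 - q.2 (Nat.unpair n).1) := by
    rintro n ⟨K, d⟩ ⟨h1, h2, h3⟩
    obtain ⟨K', d', c1, c2, c3, c4, c5, c6, c7, c8⟩ := D.step_exists hzd n h1 h2 h3
    exact ⟨(K', d'), ⟨c1, c3, c4⟩, c2, c5, c6, c7, c8⟩
  choose f hf0 hf1 hf2 hf3 hf4 hf5 using hstep
  let S : ℕ → {p : Set X × (ℕ → ℝ) //
      IsClopen p.1 ∧ (∀ i, 0 < p.2 i) ∧ D.μ p.1 = ∑' i, ENNReal.ofReal (p.2 i)} :=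
    fun n => Nat.rec (motive := fun _ => {p : Set X × (ℕ → ℝ) //
        IsClopen p.1 ∧ (∀ i, 0 < p.2 i) ∧ D.μ p.1 = ∑' i, ENNReal.ofReal (p.2 i)})
      ⟨(A, a), hA, ha, hsum⟩ (fun n s => ⟨f n s.1 s.2, hf0 n s.1 s.2⟩) n
  let K : ℕ → Set X := fun n => (S n).1.1
  let d : ℕ → ℕ → ℝ := fun n => (S n).1.2
  have hS0 : K 0 = A := rfl
  have hd0 : d 0 = a := rfl
  have hKcl : ∀ n, IsClopen (K n) := fun n => (S n).2.1
  have hdpos : ∀ n i, 0 < d n i := fun n => (S n).2.2.1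
  have hμK : ∀ n, D.μ (K n) = ∑' i, ENNReal.ofReal (d n i) := fun n => (S n).2.2.2
  have hKsub : ∀ n, K (n+1) ⊆ K n := fun n => hf1 n (S n).1 (S n).2
  have hdeq : ∀ n i, i ≠ (Nat.unpair n).1 → d (n+1) i = d n i := fun n => hf2 n (S n).1 (S n).2
  have hdlt : ∀ n, d (n+1) (Nat.unpair n).1 < d n (Nat.unpair n).1 := fun n => hf3 n (S n).1 (S n).2
  have hdsm : ∀ n, d (n+1) (Nat.unpair n).1 < (1/2 : ℝ)^n := fun n => hf4 n (S n).1 (S n).2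
  have hcrumbμ : ∀ n, D.μ (K n \ K (n+1))
      = ENNReal.ofReal (d n (Nat.unpair n).1 - d (n+1) (Nat.unpair n).1) :=
    fun n => hf5 n (S n).1 (S n).2
  clear_value S
  -- derived monotonicity facts
  have hanti : Antitone K := antitone_nat_of_succ_le hKsub
  have hKA : ∀ n, K n ⊆ A := fun n => hS0 ▸ hanti (Nat.zero_le n)
  have hdantiStep : ∀ i n, d (n+1) i ≤ d n i := by
    intro i n
    by_cases h : i = (Nat.unpair n).1
    · rw [h]; exact (hdlt n).le
    · rw [hdeq n i h]
  have hdanti : ∀ i, Antitone (fun n => d n i) := fun i => antitone_nat_of_succ_le (hdantiStep i)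
  have hda : ∀ n i, d n i ≤ a i := fun n i => by
    have := hdanti i (Nat.zero_le n)
    simpa [hd0] using this
  have hdsmall : ∀ i k n, Nat.pair i k < n → d n i < (1/2 : ℝ)^k := by
    intro i k n hn
    have h1 : d n i ≤ d (Nat.pair i k + 1) i := hdanti i hn
    have h2 : d (Nat.pair i k + 1) i < (1/2 : ℝ)^(Nat.pair i k) := by
      have h3 := hdsm (Nat.pair i k)
      rwa [Nat.unpair_pair] at h3
    have h3 : ((1:ℝ)/2)^(Nat.pair i k) ≤ (1/2 : ℝ)^k :=
      pow_le_pow_of_le_one (by norm_num) (by norm_num) (Nat.right_le_pair i k)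
    linarith
  have hdtend : ∀ i, Filter.Tendsto (fun n => d n i) Filter.atTop (nhds 0) := by
    intro i
    rw [Metric.tendsto_atTop]
    intro ε hε
    obtain ⟨k, hk⟩ := exists_pow_lt_of_lt_one hε (by norm_num : (1:ℝ)/2 < 1)
    refine ⟨Nat.pair i k + 1, fun n hn => ?_⟩
    rw [Real.dist_eq, sub_zero, abs_of_pos (hdpos n i)]
    exact lt_trans (hdsmall i k n (by omega)) hk
  have hdsummable : ∀ n, Summable (d n) :=
    fun n => Summable.of_nonneg_of_le (fun i => (hdpos n i).le) (hda n) hsumm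
  have hμKn : ∀ n, D.μ (K n) = ENNReal.ofReal (∑' i, d n i) := fun n => by
    rw [hμK n, ENNReal.ofReal_tsum_of_nonneg (fun i => (hdpos n i).le) (hdsummable n)]
  have hstend : Filter.Tendsto (fun n => ∑' i, d n i) Filter.atTop (nhds 0) := by
    rw [Metric.tendsto_atTop]
    intro ε hε
    have htail : Filter.Tendsto (fun N => ∑' i, a (i + N)) Filter.atTop (nhds 0) :=
      tendsto_sum_nat_add a
    obtain ⟨N, hN⟩ := (Metric.tendsto_atTop.1 htail) (ε/2) (by linarith)
    have htailsum : ∀ M, Summable (fun i => a (i + M)) :=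
      fun M => (summable_nat_add_iff M).2 hsumm
    have hN' : ∑' i, a (i + N) < ε/2 := by
      have h4 := hN N le_rfl
      rwa [Real.dist_eq, sub_zero, abs_of_nonneg (tsum_nonneg fun i => (ha _).le)] at h4
    obtain ⟨k, hk⟩ := exists_pow_lt_of_lt_one
      (show (0:ℝ) < ε/2/(N+1) by positivity) (by norm_num : (1:ℝ)/2 < 1)
    refine ⟨((Finset.range N).sup (fun i => Nat.pair i k)) + 1, fun n hn => ?_⟩
    have hsplit : ∑' i, d n i = (∑ i ∈ Finset.range N, d n i) + ∑' i, d n (i + N) :=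
      ((hdsummable n).sum_add_tsum_nat_add N).symm
    have hb1 : ∑ i ∈ Finset.range N, d n i ≤ N * ((1/2 : ℝ)^k) := by
      calc ∑ i ∈ Finset.range N, d n i ≤ ∑ _i ∈ Finset.range N, (1/2 : ℝ)^k := by
            apply Finset.sum_le_sum
            intro i hi
            have hpair : Nat.pair i k < n :=
              lt_of_lt_of_le (Nat.lt_succ_of_le
                (Finset.le_sup (f := fun i => Nat.pair i k) hi)) hn
            exact (hdsmall i k n hpair).le
        _ = N * (1/2 : ℝ)^k := by
            rw [Finset.sum_const, Finset.card_range, nsmul_eq_mul]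
    have hb2 : ∑' i, d n (i + N) ≤ ∑' i, a (i + N) :=
      Summable.tsum_le_tsum (fun i => hda n (i + N)) ((summable_nat_add_iff N).2 (hdsummable n))
        (htailsum N)
    have hbN : (N:ℝ) * (1/2 : ℝ)^k < ε/2 := by
      have hNpos : (0:ℝ) < (N:ℝ) + 1 := by positivity
      have h5 : ((N:ℝ)+1) * ((1/2 : ℝ)^k) < ((N:ℝ)+1) * (ε/2/(N+1)) := by
        apply mul_lt_mul_of_pos_left hk hNpos
      have h6 : ((N:ℝ)+1) * (ε/2/(N+1)) = ε/2 := by field_simp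
      nlinarith [pow_pos (show (0:ℝ) < 1/2 by norm_num) k]
    rw [Real.dist_eq, sub_zero, abs_of_nonneg (tsum_nonneg fun i => (hdpos n i).le), hsplit]
    linarith
  -- the crumbs, the residual set `L`, the bins `V i`
  set crumb : ℕ → Set X := fun n => K n \ K (n+1) with hcrumbdef
  have hcrumbcl : ∀ n, IsClopen (crumb n) := fun n => (hKcl n).diff (hKcl (n+1))
  have hcrumb_disj : ∀ {n m : ℕ}, n < m → Disjoint (crumb n) (crumb m) := by
    intro n m h
    rw [Set.disjoint_left]
    intro x hx hx'
    exact hx.2 (hanti (show n+1 ≤ m from h) hx'.1)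
  set L : Set X := ⋂ n, K n with hLdef
  have hLcl : IsClosed L := isClosed_iInter (fun n => (hKcl n).isClosed)
  have hLμ : D.μ L = 0 := by
    have hle : ∀ n, D.μ L ≤ ENNReal.ofReal (∑' i, d n i) := fun n => by
      rw [← hμKn n]
      exact measure_mono (Set.iInter_subset K n)
    have htend : Filter.Tendsto (fun n => ENNReal.ofReal (∑' i, d n i))
        Filter.atTop (nhds 0) := by
      have h7 := (ENNReal.continuous_ofReal.tendsto 0).comp hstend
      simpa [Function.comp_def] using h7
    have h8 : D.μ L ≤ 0 := ge_of_tendsto' htend hle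
    exact le_antisymm h8 zero_le
  set V : ℕ → Set X := fun i => ⋃ n, if (Nat.unpair n).1 = i then crumb n else ∅ with hVdef
  have hVopen : ∀ i, IsOpen (V i) := fun i => isOpen_iUnion (fun n => by
    split
    · exact (hcrumbcl n).isOpen
    · exact isOpen_empty)
  have hVsub : ∀ i n, (if (Nat.unpair n).1 = i then crumb n else ∅) ⊆ crumb n := fun i n => by
    split
    · exact subset_rfl
    · exact Set.empty_subset _
  -- measure of each bin
  have hVμ : ∀ i, D.μ (V i) = ENNReal.ofReal (a i) := by
    intro i
    have hdisj : Pairwise (Function.onFun Disjoint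
        (fun n => if (Nat.unpair n).1 = i then crumb n else ∅)) := by
      intro n m hnm
      rcases lt_or_gt_of_ne hnm with h | h
      · exact Disjoint.mono (hVsub i n) (hVsub i m) (hcrumb_disj h)
      · exact (Disjoint.mono (hVsub i m) (hVsub i n) (hcrumb_disj h)).symm
    have hmeas : ∀ n, MeasurableSet (if (Nat.unpair n).1 = i then crumb n else ∅) := fun n => by
      split
      · exact (hcrumbcl n).isClosed.measurableSet
      · exact MeasurableSet.empty
    rw [hVdef]
    rw [measure_iUnion hdisj hmeas]
    have hterm : ∀ n, D.μ (if (Nat.unpair n).1 = i then crumb n else ∅)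
        = ENNReal.ofReal (d n i - d (n+1) i) := by
      intro n
      split_ifs with h
      · rw [← h]
        exact hcrumbμ n
      · have h9 : d (n+1) i = d n i := hdeq n i (fun hh => h hh.symm)
        rw [h9]
        simp
    rw [tsum_congr hterm]
    have he_nonneg : ∀ n, 0 ≤ d n i - d (n+1) i := fun n => by linarith [hdantiStep i n]
    have hesum : Summable (fun n => d n i - d (n+1) i) := by
      apply summable_of_sum_range_le he_nonneg
      intro n
      rw [Finset.sum_range_sub' (fun m => d m i) n]
      have h10 : d 0 i = a i := by rw [hd0]
      have h11 := hdpos n i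
      linarith
    rw [← ENNReal.ofReal_tsum_of_nonneg he_nonneg hesum]
    congr 1
    have hps : Filter.Tendsto (fun n => ∑ j ∈ Finset.range n, (d j i - d (j+1) i))
        Filter.atTop (nhds (a i)) := by
      have h12 : (fun n => ∑ j ∈ Finset.range n, (d j i - d (j+1) i))
          = fun n => a i - d n i := funext fun n => by
        rw [Finset.sum_range_sub' (fun m => d m i) n]
        rw [show d 0 i = a i from by rw [hd0]]
      rw [h12]
      have h13 := Filter.Tendsto.sub (tendsto_const_nhds (x := a i)
        (f := Filter.atTop (α := ℕ))) (hdtend i)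
      simpa using h13
    exact tendsto_nhds_unique (hesum.hasSum.tendsto_sum_nat) hps
  -- the bins cover `A \ L`
  have hVcover : (⋃ i, V i) = A \ L := by
    apply Set.Subset.antisymm
    · refine Set.iUnion_subset fun i => Set.iUnion_subset fun n => ?_
      refine (hVsub i n).trans ?_
      intro x hx
      refine ⟨hKA n hx.1, fun hxL => ?_⟩
      exact hx.2 (Set.mem_iInter.1 hxL (n+1))
    · rintro x ⟨hxA, hxL⟩
      have hex : ∃ n, x ∉ K n := by
        by_contra h
        push_neg at h
        exact hxL (Set.mem_iInter.2 h)
      have hn0 : x ∉ K (Nat.find hex) := Nat.find_spec hex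
      have hn0pos : Nat.find hex ≠ 0 := by
        intro h
        rw [h, hS0] at hn0
        exact hn0 hxA
      obtain ⟨m, hm⟩ := Nat.exists_eq_succ_of_ne_zero hn0pos
      have hxm : x ∈ K m := by
        by_contra h
        exact (Nat.find_min hex (by omega)) h
      refine Set.mem_iUnion.2 ⟨(Nat.unpair m).1, Set.mem_iUnion.2 ⟨m, ?_⟩⟩
      rw [if_pos rfl]
      refine ⟨hxm, ?_⟩
      rw [show m + 1 = Nat.find hex from hm.symm]
      exact hn0
  -- closure control for the bins
  have hVclosure : ∀ i, closure (V i) ⊆ V i ∪ L := by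
    intro i y hy
    by_cases hyL : y ∈ L
    · exact Or.inr hyL
    left
    obtain ⟨m, hm⟩ : ∃ m, y ∉ K m := by
      by_contra h
      push_neg at h
      exact hyL (Set.mem_iInter.2 h)
    have hsub : V i ⊆ (⋃ n ∈ Finset.range m, if (Nat.unpair n).1 = i then crumb n else ∅)
        ∪ K m := by
      refine Set.iUnion_subset fun n => ?_
      rcases lt_or_ge n m with h | h
      · exact fun x hx => Or.inl (Set.mem_biUnion (Finset.mem_range.2 h) hx)
      · exact fun x hx => Or.inr (hanti h (hVsub i n hx).1)
    have hFclosed : IsClosed (⋃ n ∈ Finset.range m,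
        if (Nat.unpair n).1 = i then crumb n else ∅) := by
      apply Set.Finite.isClosed_biUnion (Finset.finite_toSet _)
      intro n _
      split
      · exact (hcrumbcl n).isClosed
      · exact isClosed_empty
    have h14 := closure_mono hsub hy
    rw [closure_union, hFclosed.closure_eq, (hKcl m).isClosed.closure_eq] at h14
    rcases h14 with h | h
    · obtain ⟨n, hn1, hn2⟩ := Set.mem_iUnion₂.1 h
      exact Set.mem_iUnion.2 ⟨n, hn2⟩
    · exact absurd h hm
  -- the inessential reduction `X'`
  set X' : Set X := ⋂ k : ℤ, D.iter k ⁻¹' Lᶜ with hX'def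
  have hnull : ∀ k : ℤ, D.μ (D.iter k ⁻¹' L) = 0 :=
    D.iter_null hLcl.measurableSet hLμ
  have hmemX' : ∀ x, x ∈ X' ↔ ∀ k : ℤ, D.iter k x ∉ L := by
    intro x
    rw [hX'def]
    simp [Set.mem_iInter]
  have hX'L : ∀ x ∈ X', x ∉ L := by
    intro x hx
    have h15 := (hmemX' x).1 hx 0
    rwa [D.iter_zero] at h15
  -- T-invariance
  have hTinv : (⇑D.T) ⁻¹' X' = X' := by
    ext x
    rw [Set.mem_preimage, hmemX', hmemX']
    constructor
    · intro h k
      have h16 := h (k - 1)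
      have h17 : D.iter k x = D.iter (k - 1) (D.T x) := by
        have h18 := D.iter_succ (k - 1) x
        rwa [show k - 1 + 1 = k by ring] at h18
      rw [h17]
      exact h16
    · intro h k
      have h16 := h (k + 1)
      rwa [D.iter_succ k x] at h16
  -- open dense measurable pieces
  have hGopen : ∀ k : ℤ, IsOpen (D.iter k ⁻¹' Lᶜ) :=
    fun k => hLcl.isOpen_compl.preimage (D.iter_continuous k)
  have hGdense : ∀ k : ℤ, Dense (D.iter k ⁻¹' Lᶜ) := by
    intro k
    have hpc : (D.iter k ⁻¹' L)ᶜ = D.iter k ⁻¹' Lᶜ := by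
      rw [Set.preimage_compl]
    rw [← hpc]
    rw [← interior_eq_empty_iff_dense_compl]
    by_contra h
    have hne : (interior (D.iter k ⁻¹' L)).Nonempty := Set.nonempty_iff_ne_empty.2 h
    have hpos := D.fullSupport _ isOpen_interior hne
    have hle := measure_mono (μ := D.μ) (interior_subset (s := D.iter k ⁻¹' L))
    rw [hnull k] at hle
    exact absurd (le_antisymm hle zero_le) (ne_of_gt hpos)
  have hX'dense : Dense X' := by
    letI := TopologicalSpace.upgradeIsCompletelyMetrizable X
    exact dense_iInter_of_isOpen hGopen hGdense
  have hX'gdelta : IsGδ X' := IsGδ.iInter (fun k => (hGopen k).isGδ)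
  have hcompl : X'ᶜ = ⋃ k : ℤ, D.iter k ⁻¹' L := by
    rw [hX'def, Set.compl_iInter]
    apply Set.iUnion_congr
    intro k
    rw [← Set.preimage_compl, compl_compl]
  have hX'cnull : D.μ X'ᶜ = 0 := by
    rw [hcompl]
    exact measure_iUnion_null hnull
  have hX'full : D.μ X' = 1 := by
    have h17 : (1 : ENNReal) ≤ D.μ X' := by
      calc (1 : ENNReal) = D.μ Set.univ := measure_univ.symm
        _ ≤ D.μ X' + D.μ X'ᶜ := by
            rw [← Set.union_compl_self X']
            exact measure_union_le _ _
        _ = D.μ X' := by rw [hX'cnull, add_zero]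
    exact le_antisymm prob_le_one h17
  -- conclusion
  refine ⟨X', ⟨hTinv, hX'dense, hX'gdelta, hX'full⟩, fun i => V i ∩ X', ?_, ?_, ?_, ?_⟩
  · -- disjointness
    intro i j hij
    have hVdisj : Disjoint (V i) (V j) := by
      rw [Set.disjoint_left]
      rintro x hxi hxj
      obtain ⟨n, hn⟩ := Set.mem_iUnion.1 hxi
      obtain ⟨m, hm⟩ := Set.mem_iUnion.1 hxj
      by_cases h : (Nat.unpair n).1 = i
      swap
      · rw [if_neg h] at hn; exact hn
      by_cases h' : (Nat.unpair m).1 = j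
      swap
      · rw [if_neg h'] at hm; exact hm
      rw [if_pos h] at hn
      rw [if_pos h'] at hm
      have hnm : n ≠ m := fun he => hij (by rw [← h, he, h'])
      rcases lt_or_gt_of_ne hnm with hlt | hlt
      · exact Set.disjoint_left.1 (hcrumb_disj hlt) hn hm
      · exact Set.disjoint_left.1 (hcrumb_disj hlt) hm hn
    exact hVdisj.mono Set.inter_subset_left Set.inter_subset_left
  · -- covering
    rw [← Set.iUnion_inter, hVcover]
    ext x
    constructor
    · rintro ⟨⟨hxA, _⟩, hx'⟩
      exact ⟨hxA, hx'⟩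
    · rintro ⟨hxA, hx'⟩
      exact ⟨⟨hxA, hX'L x hx'⟩, hx'⟩
  · -- relative clopenness
    intro i
    have hpre : (Subtype.val ⁻¹' (V i ∩ X') : Set X') = Subtype.val ⁻¹' (V i) := by
      ext x
      simp [x.2]
    rw [hpre]
    constructor
    · -- closed
      have hclosedeq : (Subtype.val ⁻¹' (V i) : Set X') = Subtype.val ⁻¹' (closure (V i)) := by
        ext x
        constructor
        · exact fun hx => subset_closure hx
        · intro hx
          rcases hVclosure i hx with h | h
          · exact h
          · exact absurd h (hX'L x.1 x.2)
      rw [hclosedeq]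
      exact isClosed_closure.preimage continuous_subtype_val
    · exact (hVopen i).preimage continuous_subtype_val
  · -- measures
    intro i
    rw [measure_inter_conull hX'cnull]
    exact hVμ i
end

section
/- Let (X, μ, T) be a dynamical system with X 0-dimensional, and suppose T preserves μ (μ∘T⁻¹ = μ). Let A and B be two non-empty clopen subsets of X with μ(A) = μ(B). Then there exist open subsets A' ⊂ A and B' ⊂ B with μ(A∖A') = μ(B∖B') = 0 and a homeomorphism S : A' → B' which belongs to the topological full groupoid [[T]]_top, i.e. S(x) = T^{a(x)}x for a function a : A' → ℤ continuous on A'. -/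
open MeasureTheory Topology

section AuxLemma14

namespace DynSysAux

open Set

variable {X : Type*} [TopologicalSpace X] [MeasurableSpace X]

theorem iter_add (D : DynSys X) (m n : ℤ) (x : X) :
    D.iter (m + n) x = D.iter m (D.iter n x) := by
  simp [DynSys.iter, zpow_add, Equiv.Perm.mul_apply]

theorem iter_zero (D : DynSys X) (x : X) : D.iter 0 x = x := by simp [DynSys.iter]

theorem iter_one (D : DynSys X) (x : X) : D.iter 1 x = D.T x := by simp [DynSys.iter]

theorem iter_neg_one (D : DynSys X) (x : X) : D.iter (-1) x = D.T.symm x := by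
  simp [DynSys.iter, zpow_neg, Equiv.Perm.inv_def]

theorem iter_neg_cancel (D : DynSys X) (n : ℤ) (x : X) :
    D.iter (-n) (D.iter n x) = x := by
  rw [← iter_add, neg_add_cancel, iter_zero]

theorem iter_cancel_neg (D : DynSys X) (n : ℤ) (x : X) :
    D.iter n (D.iter (-n) x) = x := by
  rw [← iter_add, add_neg_cancel, iter_zero]

theorem iter_continuous (D : DynSys X) (n : ℤ) : Continuous (D.iter n) := by
  induction n using Int.induction_on with
  | zero =>
      have h : D.iter 0 = id := funext (iter_zero D)
      rw [h]; exact continuous_id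
  | succ n ih =>
      have h : D.iter (n + 1) = D.iter n ∘ ⇑D.T := by
        funext x
        rw [Function.comp_apply, ← iter_one D x, ← iter_add]
      rw [h]; exact ih.comp D.T.continuous
  | pred n ih =>
      have h : D.iter (-n - 1) = D.iter (-n) ∘ ⇑D.T.symm := by
        funext x
        have hh : (-(n:ℤ) - 1) = (-(n:ℤ)) + (-1) := by ring
        rw [Function.comp_apply, hh, iter_add, iter_neg_one]
      rw [h]; exact ih.comp D.T.symm.continuous

theorem iter_injective (D : DynSys X) (n : ℤ) : Function.Injective (D.iter n) :=
  fun _ _ h => (D.T.toEquiv ^ n).injective h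

theorem mp_T [BorelSpace X] (D : DynSys X)
    (hmp : MeasureTheory.Measure.map (⇑D.T) D.μ = D.μ) :
    MeasureTheory.MeasurePreserving (⇑D.T) D.μ D.μ :=
  ⟨D.T.continuous.measurable, hmp⟩

theorem mp_Tsymm [BorelSpace X] (D : DynSys X)
    (hmp : MeasureTheory.Measure.map (⇑D.T) D.μ = D.μ) :
    MeasureTheory.MeasurePreserving (⇑D.T.symm) D.μ D.μ := by
  refine ⟨D.T.symm.continuous.measurable, ?_⟩
  conv_lhs => rw [← hmp]
  rw [MeasureTheory.Measure.map_map D.T.symm.continuous.measurable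
    D.T.continuous.measurable]
  have h : (⇑D.T.symm ∘ ⇑D.T) = id := funext fun x => D.T.symm_apply_apply x
  rw [h, MeasureTheory.Measure.map_id]

theorem iter_mp [BorelSpace X] (D : DynSys X)
    (hmp : MeasureTheory.Measure.map (⇑D.T) D.μ = D.μ) (n : ℤ) :
    MeasureTheory.MeasurePreserving (D.iter n) D.μ D.μ := by
  induction n using Int.induction_on with
  | zero =>
      have h : D.iter 0 = id := funext (iter_zero D)
      rw [h]; exact MeasureTheory.MeasurePreserving.id _
  | succ n ih =>
      have h : D.iter (n + 1) = D.iter n ∘ ⇑D.T := by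
        funext x
        rw [Function.comp_apply, ← iter_one D x, ← iter_add]
      rw [h]; exact ih.comp (mp_T D hmp)
  | pred n ih =>
      have h : D.iter (-n - 1) = D.iter (-n) ∘ ⇑D.T.symm := by
        funext x
        have hh : (-(n:ℤ) - 1) = (-(n:ℤ)) + (-1) := by ring
        rw [Function.comp_apply, hh, iter_add, iter_neg_one]
      rw [h]; exact ih.comp (mp_Tsymm D hmp)

/-- Accumulated pairs of "already used" subsets of `A` and of `B`. -/
def famU (D : DynSys X) (A B : Set X) : ℕ → Set X × Set X
  | 0 => (∅, ∅)
  | n + 1 =>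
      ((famU D A B n).1 ∪
        ((A \ (famU D A B n).1) ∩ D.iter (n : ℤ) ⁻¹' (B \ (famU D A B n).2)),
       (famU D A B n).2 ∪
        D.iter (-(n : ℤ)) ⁻¹'
          ((A \ (famU D A B n).1) ∩ D.iter (n : ℤ) ⁻¹' (B \ (famU D A B n).2)))

/-- The `n`-th clopen piece of `A`, moved to `B` by `T^n`. -/
def fam (D : DynSys X) (A B : Set X) (n : ℕ) : Set X :=
  (A \ (famU D A B n).1) ∩ D.iter (n : ℤ) ⁻¹' (B \ (famU D A B n).2)

/-- The image `T^n (fam n)`, written as a preimage under `T^{-n}`. -/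
def famB (D : DynSys X) (A B : Set X) (n : ℕ) : Set X :=
  D.iter (-(n : ℤ)) ⁻¹' fam D A B n

theorem famU_succ (D : DynSys X) (A B : Set X) (n : ℕ) :
    famU D A B (n + 1) =
      ((famU D A B n).1 ∪ fam D A B n, (famU D A B n).2 ∪ famB D A B n) := rfl

theorem fam_subset (D : DynSys X) (A B : Set X) (n : ℕ) :
    fam D A B n ⊆ A \ (famU D A B n).1 := inter_subset_left

theorem famB_subset (D : DynSys X) (A B : Set X) (n : ℕ) :
    famB D A B n ⊆ B \ (famU D A B n).2 := by
  intro y hy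
  have h2 : D.iter (n : ℤ) (D.iter (-(n : ℤ)) y) ∈ B \ (famU D A B n).2 := hy.2
  rwa [iter_cancel_neg] at h2

theorem famU_fst_mono (D : DynSys X) (A B : Set X) {m n : ℕ} (h : m ≤ n) :
    (famU D A B m).1 ⊆ (famU D A B n).1 := by
  induction n, h using Nat.le_induction with
  | base => exact subset_rfl
  | succ n _ ih => exact ih.trans (by rw [famU_succ]; exact subset_union_left)

theorem famU_snd_mono (D : DynSys X) (A B : Set X) {m n : ℕ} (h : m ≤ n) :
    (famU D A B m).2 ⊆ (famU D A B n).2 := by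
  induction n, h using Nat.le_induction with
  | base => exact subset_rfl
  | succ n _ ih => exact ih.trans (by rw [famU_succ]; exact subset_union_left)

theorem fam_subset_famU (D : DynSys X) (A B : Set X) {k n : ℕ} (h : k < n) :
    fam D A B k ⊆ (famU D A B n).1 := by
  refine subset_trans ?_ (famU_fst_mono D A B h)
  rw [famU_succ]; exact subset_union_right

theorem famB_subset_famU (D : DynSys X) (A B : Set X) {k n : ℕ} (h : k < n) :
    famB D A B k ⊆ (famU D A B n).2 := by
  refine subset_trans ?_ (famU_snd_mono D A B h)
  rw [famU_succ]; exact subset_union_right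

theorem fam_eq_of_mem (D : DynSys X) (A B : Set X) {k n : ℕ} {x : X}
    (hk : x ∈ fam D A B k) (hn : x ∈ fam D A B n) : k = n := by
  by_contra hne
  rcases Nat.lt_or_ge k n with h | h
  · exact (fam_subset D A B n hn).2 (fam_subset_famU D A B h hk)
  · have h' : n < k := by omega
    exact (fam_subset D A B k hk).2 (fam_subset_famU D A B h' hn)

theorem famB_eq_of_mem (D : DynSys X) (A B : Set X) {k n : ℕ} {y : X}
    (hk : y ∈ famB D A B k) (hn : y ∈ famB D A B n) : k = n := by
  by_contra hne
  rcases Nat.lt_or_ge k n with h | h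
  · exact (famB_subset D A B n hn).2 (famB_subset_famU D A B h hk)
  · have h' : n < k := by omega
    exact (famB_subset D A B k hk).2 (famB_subset_famU D A B h' hn)

theorem famU_clopen (D : DynSys X) (A B : Set X) (hA : IsClopen A) (hB : IsClopen B)
    (n : ℕ) : IsClopen (famU D A B n).1 ∧ IsClopen (famU D A B n).2 := by
  induction n with
  | zero => exact ⟨isClopen_empty, isClopen_empty⟩
  | succ n ih =>
      have hf : IsClopen (fam D A B n) :=
        (hA.diff ih.1).inter ((hB.diff ih.2).preimage (iter_continuous D n))
      rw [famU_succ]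
      exact ⟨ih.1.union hf, ih.2.union (hf.preimage (iter_continuous D _))⟩

theorem fam_clopen (D : DynSys X) (A B : Set X) (hA : IsClopen A) (hB : IsClopen B)
    (n : ℕ) : IsClopen (fam D A B n) :=
  (hA.diff (famU_clopen D A B hA hB n).1).inter
    ((hB.diff (famU_clopen D A B hA hB n).2).preimage (iter_continuous D n))

theorem famB_clopen (D : DynSys X) (A B : Set X) (hA : IsClopen A) (hB : IsClopen B)
    (n : ℕ) : IsClopen (famB D A B n) :=
  (fam_clopen D A B hA hB n).preimage (iter_continuous D _)

theorem famU_fst_subset_iUnion (D : DynSys X) (A B : Set X) (m : ℕ) :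
    (famU D A B m).1 ⊆ ⋃ n, fam D A B n := by
  induction m with
  | zero => simp [famU]
  | succ m ih =>
      rw [famU_succ]
      exact union_subset ih (subset_iUnion _ m)

theorem famU_snd_subset_iUnion (D : DynSys X) (A B : Set X) (m : ℕ) :
    (famU D A B m).2 ⊆ ⋃ n, famB D A B n := by
  induction m with
  | zero => simp [famU]
  | succ m ih =>
      rw [famU_succ]
      exact union_subset ih (subset_iUnion _ m)

end DynSysAux

end AuxLemma14

/-- **Lemma 1.4(i).** If `T` preserves `μ` and `A`, `B` are non-empty clopen sets of
equal measure, then there is a homeomorphism `S : A' → B'` in the topological full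
groupoid `[[T]]_top` between open full-measure subsets `A' ⊆ A`, `B' ⊆ B`. -/
theorem exists_full_groupoid_homeo_measure_preserving {X : Type*}
    [TopologicalSpace X] [PolishSpace X] [MeasurableSpace X] [BorelSpace X]
    (D : DynSys X) (hzd : ZeroDimensional X)
    (hmp : Measure.map (⇑D.T) D.μ = D.μ)
    (A B : Set X) (hA : IsClopen A) (hB : IsClopen B)
    (hAne : A.Nonempty) (hBne : B.Nonempty)
    (hAB : D.μ A = D.μ B) :
    ∃ (A' B' : Set X) (S S' : X → X) (a : X → ℤ),
      IsOpen A' ∧ A' ⊆ A ∧ IsOpen B' ∧ B' ⊆ B ∧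
      D.μ (A \ A') = 0 ∧ D.μ (B \ B') = 0 ∧
      Set.BijOn S A' B' ∧ ContinuousOn S A' ∧ ContinuousOn S' B' ∧
      Set.InvOn S' S A' B' ∧
      ContinuousOn a A' ∧ (∀ x ∈ A', S x = D.iter (a x) x) := by
  classical
  haveI := D.prob
  open DynSysAux in
  clear hzd hAne hBne
  have hTm : Measurable (⇑D.T) := D.T.continuous.measurable
  have hMP : MeasurePreserving (⇑D.T) D.μ D.μ := ⟨hTm, hmp⟩
  have hErg : Ergodic (⇑D.T) D.μ := by
    refine ⟨hMP, ⟨fun s hs hinv => Filter.eventuallyConst_set'.mpr ?_⟩⟩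
    rcases D.ergodic s hs hinv with h | h
    · exact Or.inl (ae_eq_empty.mpr h)
    · exact Or.inr (ae_eq_univ.mpr ((prob_compl_eq_zero_iff hs).mpr h))
  set fA : ℕ → Set X := DynSysAux.fam D A B with hfAdef
  set fB : ℕ → Set X := DynSysAux.famB D A B with hfBdef
  set A' : Set X := ⋃ n, fA n with hA'def
  set B' : Set X := ⋃ n, fB n with hB'def
  have hfAclopen : ∀ n, IsClopen (fA n) := DynSysAux.fam_clopen D A B hA hB
  have hfBclopen : ∀ n, IsClopen (fB n) := DynSysAux.famB_clopen D A B hA hB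
  have hopenA' : IsOpen A' := isOpen_iUnion fun n => (hfAclopen n).isOpen
  have hopenB' : IsOpen B' := isOpen_iUnion fun n => (hfBclopen n).isOpen
  have hA'sub : A' ⊆ A :=
    Set.iUnion_subset fun n =>
      (DynSysAux.fam_subset D A B n).trans Set.diff_subset
  have hB'sub : B' ⊆ B :=
    Set.iUnion_subset fun n =>
      (DynSysAux.famB_subset D A B n).trans Set.diff_subset
  set a : X → ℤ := fun x => if h : ∃ n, x ∈ fA n then ((Nat.find h : ℕ) : ℤ) else 0
    with hadef
  set b : X → ℤ := fun y => if h : ∃ n, y ∈ fB n then ((Nat.find h : ℕ) : ℤ) else 0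
    with hbdef
  have ha_eq : ∀ n : ℕ, ∀ x ∈ fA n, a x = (n : ℤ) := by
    intro n x hx
    have hex : ∃ m, x ∈ fA m := ⟨n, hx⟩
    have h1 : Nat.find hex = n :=
      DynSysAux.fam_eq_of_mem D A B (Nat.find_spec hex) hx
    simp only [hadef, dif_pos hex, h1]
  have hb_eq : ∀ n : ℕ, ∀ y ∈ fB n, b y = (n : ℤ) := by
    intro n y hy
    have hex : ∃ m, y ∈ fB m := ⟨n, hy⟩
    have h1 : Nat.find hex = n :=
      DynSysAux.famB_eq_of_mem D A B (Nat.find_spec hex) hy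
    simp only [hbdef, dif_pos hex, h1]
  set S : X → X := fun x => D.iter (a x) x with hSdef
  set S' : X → X := fun y => D.iter (-(b y)) y with hS'def
  have hS_eq : ∀ n : ℕ, ∀ x ∈ fA n, S x = D.iter (n : ℤ) x := by
    intro n x hx
    rw [hSdef]; simp only [ha_eq n x hx]
  have hS'_eq : ∀ n : ℕ, ∀ y ∈ fB n, S' y = D.iter (-(n : ℤ)) y := by
    intro n y hy
    rw [hS'def]; simp only [hb_eq n y hy]
  have hSmem : ∀ n : ℕ, ∀ x ∈ fA n, S x ∈ fB n := by
    intro n x hx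
    have : D.iter (-(n : ℤ)) (S x) ∈ fA n := by
      rw [hS_eq n x hx, DynSysAux.iter_neg_cancel]; exact hx
    exact Set.mem_preimage.mpr this
  have hS'mem : ∀ n : ℕ, ∀ y ∈ fB n, S' y ∈ fA n := by
    intro n y hy
    rw [hS'_eq n y hy]
    exact hy
  have hmapS : Set.MapsTo S A' B' := by
    intro x hx
    obtain ⟨n, hn⟩ := Set.mem_iUnion.mp hx
    exact Set.mem_iUnion.mpr ⟨n, hSmem n x hn⟩
  have hmapS' : Set.MapsTo S' B' A' := by
    intro y hy
    obtain ⟨n, hn⟩ := Set.mem_iUnion.mp hy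
    exact Set.mem_iUnion.mpr ⟨n, hS'mem n y hn⟩
  have hInv : Set.InvOn S' S A' B' := by
    constructor
    · intro x hx
      obtain ⟨n, hn⟩ := Set.mem_iUnion.mp hx
      rw [hS'_eq n _ (hSmem n x hn), hS_eq n x hn, DynSysAux.iter_neg_cancel]
    · intro y hy
      obtain ⟨n, hn⟩ := Set.mem_iUnion.mp hy
      have h1 : D.iter (-(n : ℤ)) y ∈ fA n := hn
      rw [hS'_eq n y hn, hS_eq n _ h1, DynSysAux.iter_cancel_neg]
  have hBij : Set.BijOn S A' B' := hInv.bijOn hmapS hmapS'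
  have hScont : ContinuousOn S A' := by
    intro x hx
    obtain ⟨n, hn⟩ := Set.mem_iUnion.mp hx
    apply ContinuousAt.continuousWithinAt
    have hmem : fA n ∈ 𝓝 x := (hfAclopen n).isOpen.mem_nhds hn
    exact ((DynSysAux.iter_continuous D (n : ℤ)).continuousAt).congr
      (Filter.eventuallyEq_of_mem hmem fun y hy => (hS_eq n y hy).symm)
  have hS'cont : ContinuousOn S' B' := by
    intro y hy
    obtain ⟨n, hn⟩ := Set.mem_iUnion.mp hy
    apply ContinuousAt.continuousWithinAt
    have hmem : fB n ∈ 𝓝 y := (hfBclopen n).isOpen.mem_nhds hn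
    exact ((DynSysAux.iter_continuous D (-(n : ℤ))).continuousAt).congr
      (Filter.eventuallyEq_of_mem hmem fun z hz => (hS'_eq n z hz).symm)
  have hacont : ContinuousOn a A' := by
    intro x hx
    obtain ⟨n, hn⟩ := Set.mem_iUnion.mp hx
    apply ContinuousAt.continuousWithinAt
    have hmem : fA n ∈ 𝓝 x := (hfAclopen n).isOpen.mem_nhds hn
    exact (continuousAt_const (y := (n : ℤ))).congr
      (Filter.eventuallyEq_of_mem hmem fun y hy => (ha_eq n y hy).symm)
  -- measure computations
  have hfAmeas : ∀ n, MeasurableSet (fA n) := fun n => (hfAclopen n).isOpen.measurableSet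
  have hfBmeas : ∀ n, MeasurableSet (fB n) := fun n => (hfBclopen n).isOpen.measurableSet
  have hiterMP : ∀ n : ℤ, MeasurePreserving (D.iter n) D.μ D.μ :=
    DynSysAux.iter_mp D hmp
  have hμfB : ∀ n : ℕ, D.μ (fB n) = D.μ (fA n) := fun n =>
    (hiterMP (-(n : ℤ))).measure_preimage (hfAmeas n).nullMeasurableSet
  have hdisjA : Pairwise (Function.onFun Disjoint fA) := fun k n hkn =>
    Set.disjoint_left.mpr fun x hx hx' =>
      hkn (DynSysAux.fam_eq_of_mem D A B hx hx')
  have hdisjB : Pairwise (Function.onFun Disjoint fB) := fun k n hkn =>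
    Set.disjoint_left.mpr fun y hy hy' =>
      hkn (DynSysAux.famB_eq_of_mem D A B hy hy')
  have hμA' : D.μ A' = ∑' n, D.μ (fA n) := measure_iUnion hdisjA hfAmeas
  have hμB' : D.μ B' = ∑' n, D.μ (fB n) := measure_iUnion hdisjB hfBmeas
  have hsum : D.μ B' = D.μ A' := by
    rw [hμA', hμB']; exact tsum_congr hμfB
  have hBB'meas : MeasurableSet (B \ B') :=
    hB.isOpen.measurableSet.diff hopenB'.measurableSet
  have hBbar : D.μ (B \ B') = 0 := by
    by_contra hpos
    set G : Set X := ⋃ n : ℕ, D.iter ((n : ℤ) + 1) ⁻¹' (B \ B') with hGdef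
    have hGmeas : MeasurableSet G :=
      MeasurableSet.iUnion fun n =>
        hBB'meas.preimage (DynSysAux.iter_continuous D _).measurable
    have hsubG : ⇑D.T ⁻¹' G ⊆ G := by
      intro x hxx
      simp only [hGdef, Set.mem_preimage, Set.mem_iUnion] at hxx ⊢
      obtain ⟨n, hn⟩ := hxx
      refine ⟨n + 1, ?_⟩
      have hcast : (((n + 1 : ℕ) : ℤ) + 1) = ((n : ℤ) + 1) + 1 := by push_cast; ring
      have he : D.iter (((n + 1 : ℕ) : ℤ) + 1) x = D.iter ((n : ℤ) + 1) (D.T x) := by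
        rw [hcast, ← DynSysAux.iter_one D x, ← DynSysAux.iter_add]
      rwa [he]
    rcases hErg.ae_empty_or_univ_of_preimage_ae_le hGmeas.nullMeasurableSet
        (HasSubset.Subset.eventuallyLE hsubG) with hemp | huniv
    · have h0 : D.μ G = 0 := ae_eq_empty.mp hemp
      have h1 : D.μ (D.iter (((0 : ℕ) : ℤ) + 1) ⁻¹' (B \ B')) ≤ D.μ G := by
        rw [hGdef]
        exact measure_mono (Set.subset_iUnion
          (fun n : ℕ => D.iter ((n : ℤ) + 1) ⁻¹' (B \ B')) 0)
      rw [(hiterMP _).measure_preimage hBB'meas.nullMeasurableSet, h0] at h1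
      exact hpos (le_antisymm h1 zero_le)
    · have h0 : D.μ Gᶜ = 0 := ae_eq_univ.mp huniv
      have hAbar : A \ A' ⊆ Gᶜ := by
        intro x hx hxG
        simp only [hGdef, Set.mem_iUnion, Set.mem_preimage] at hxG
        obtain ⟨n, hn⟩ := hxG
        apply hx.2
        have hidx : D.iter (((n + 1 : ℕ)) : ℤ) x = D.iter ((n : ℤ) + 1) x := by
          norm_cast
        have hxmem : x ∈ fA (n + 1) := by
          refine ⟨⟨hx.1, fun hc => hx.2 ?_⟩, ?_⟩
          · exact DynSysAux.famU_fst_subset_iUnion D A B (n + 1) hc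
          · refine Set.mem_preimage.mpr ?_
            rw [hidx]
            exact ⟨hn.1, fun hc => hn.2
              (DynSysAux.famU_snd_subset_iUnion D A B (n + 1) hc)⟩
        exact Set.mem_iUnion.mpr ⟨n + 1, hxmem⟩
      have hμAbar : D.μ (A \ A') = 0 := measure_mono_null hAbar h0
      have h2 : D.μ A = D.μ A' := by
        refine le_antisymm ?_ (measure_mono hA'sub)
        calc D.μ A ≤ D.μ (A' ∪ (A \ A')) := measure_mono (by
              intro x hx
              by_cases h : x ∈ A'
              exacts [Or.inl h, Or.inr ⟨hx, h⟩])
          _ ≤ D.μ A' + D.μ (A \ A') := measure_union_le _ _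
          _ = D.μ A' := by rw [hμAbar, add_zero]
      have h3 : D.μ B' = D.μ B := by rw [hsum, ← h2, hAB]
      have h4 : D.μ (B \ B') = 0 := by
        rw [measure_diff hB'sub hopenB'.measurableSet.nullMeasurableSet
          (measure_ne_top _ _), h3, tsub_self]
      exact hpos h4
  have hμB'B : D.μ B' = D.μ B := by
    refine le_antisymm (measure_mono hB'sub) ?_
    calc D.μ B ≤ D.μ (B' ∪ (B \ B')) := measure_mono (by
          intro y hy
          by_cases h : y ∈ B'
          exacts [Or.inl h, Or.inr ⟨hy, h⟩])
      _ ≤ D.μ B' + D.μ (B \ B') := measure_union_le _ _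
      _ = D.μ B' := by rw [hBbar, add_zero]
  have hμA'A : D.μ A' = D.μ A := by rw [← hsum, hμB'B, ← hAB]
  have hAbar0 : D.μ (A \ A') = 0 := by
    rw [measure_diff hA'sub hopenA'.measurableSet.nullMeasurableSet
      (measure_ne_top _ _), hμA'A, tsub_self]
  exact ⟨A', B', S, S', a, hopenA', hA'sub, hopenB', hB'sub, hAbar0, hBbar,
    hBij, hScont, hS'cont, hInv, hacont, fun x _ => rfl⟩
end

section
/- Let (X, μ, T) be a dynamical system. Then there exist an inessential reduction X̃ ⊂ X and a countable base (O_i)_{i=1}^∞ of the topology of ℝ such that for every i the set {x ∈ X̃ : ρ_μ(x, Tx) ∈ O_i} is clopen in X̃ (in the relative topology), where ρ_μ(x, Tx) = log ω(x). -/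
open MeasureTheory Topology

namespace DynSys

variable {X : Type*} [TopologicalSpace X] [MeasurableSpace X] (D : DynSys X)

lemma iter_zero_s9 (x : X) : D.iter 0 x = x := by
  simp [DynSys.iter]

lemma iter_succ_s9 (n : ℤ) (x : X) : D.iter (n + 1) x = D.iter n (D.T x) := by
  simp only [DynSys.iter, zpow_add_one]
  rfl

lemma iter_pred_s9 (n : ℤ) (x : X) : D.iter (n - 1) x = D.iter n (D.T.symm x) := by
  simp only [DynSys.iter, zpow_sub_one]
  rfl

lemma exists_homeo (n : ℤ) : ∃ H : X ≃ₜ X, ⇑H = D.iter n := by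
  induction n using Int.induction_on with
  | zero =>
    exact ⟨Homeomorph.refl X, by funext x; simp [D.iter_zero_s9]⟩
  | succ n ih =>
    obtain ⟨H, hH⟩ := ih
    refine ⟨D.T.trans H, ?_⟩
    funext x
    simp [Homeomorph.trans_apply, hH, D.iter_succ_s9]
  | pred n ih =>
    obtain ⟨H, hH⟩ := ih
    refine ⟨D.T.symm.trans H, ?_⟩
    funext x
    have : (-(n : ℤ) - 1) = -n - 1 := rfl
    simp only [Homeomorph.trans_apply, hH]
    rw [← D.iter_pred_s9]

lemma iter_continuous_s9 (n : ℤ) : Continuous (D.iter n) := by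
  obtain ⟨H, hH⟩ := D.exists_homeo n
  rw [← hH]; exact H.continuous

lemma iter_isOpenMap (n : ℤ) : IsOpenMap (D.iter n) := by
  obtain ⟨H, hH⟩ := D.exists_homeo n
  rw [← hH]; exact H.isOpenMap

variable [BorelSpace X]

lemma null_preimage_T {A : Set X} (hA : MeasurableSet A) (h0 : D.μ A = 0) :
    D.μ (⇑D.T ⁻¹' A) = 0 := by
  have hmeasT : Measurable (⇑D.T) := D.T.continuous.measurable
  have hmeasTs : Measurable (⇑D.T.symm) := D.T.symm.continuous.measurable
  have hB : MeasurableSet (⇑D.T ⁻¹' A) := hA.preimage hmeasT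
  have key : D.μ.withDensity (fun x => ENNReal.ofReal (D.ω x)) (⇑D.T ⁻¹' A) = 0 := by
    rw [← D.rnDeriv, MeasureTheory.Measure.map_apply hmeasTs hB]
    have : ⇑D.T.symm ⁻¹' (⇑D.T ⁻¹' A) = A := by
      ext x; simp
    rw [this, h0]
  have hωmeas : Measurable (fun x => ENNReal.ofReal (D.ω x)) :=
    ENNReal.measurable_ofReal.comp D.ωCont.measurable
  rw [MeasureTheory.withDensity_apply_eq_zero hωmeas] at key
  have : {x | (fun x => ENNReal.ofReal (D.ω x)) x ≠ 0} = Set.univ := by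
    ext x
    simp only [Set.mem_setOf_eq, Set.mem_univ, iff_true, ne_eq, ENNReal.ofReal_eq_zero, not_le]
    exact D.ωPos x
  rwa [this, Set.univ_inter] at key

lemma null_preimage_Tsymm {A : Set X} (hA : MeasurableSet A) (h0 : D.μ A = 0) :
    D.μ (⇑D.T.symm ⁻¹' A) = 0 := by
  have hmeasTs : Measurable (⇑D.T.symm) := D.T.symm.continuous.measurable
  have : D.μ (⇑D.T.symm ⁻¹' A) = D.μ.withDensity (fun x => ENNReal.ofReal (D.ω x)) A := by
    rw [← D.rnDeriv, MeasureTheory.Measure.map_apply hmeasTs hA]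
  rw [this]
  exact (MeasureTheory.withDensity_absolutelyContinuous _ _) h0

lemma null_preimage_iter {A : Set X} (hA : MeasurableSet A) (h0 : D.μ A = 0) (n : ℤ) :
    D.μ (D.iter n ⁻¹' A) = 0 := by
  induction n using Int.induction_on with
  | zero =>
    have : D.iter 0 ⁻¹' A = A := by ext x; simp [D.iter_zero_s9]
    rwa [this]
  | succ n ih =>
    have heq : D.iter (n + 1) ⁻¹' A = ⇑D.T ⁻¹' (D.iter n ⁻¹' A) := by
      ext x; simp [Set.mem_preimage, D.iter_succ_s9]
    rw [heq]
    exact D.null_preimage_T (hA.preimage (D.iter_continuous_s9 n).measurable) ih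
  | pred n ih =>
    have heq : D.iter (-(n : ℤ) - 1) ⁻¹' A = ⇑D.T.symm ⁻¹' (D.iter (-(n : ℤ)) ⁻¹' A) := by
      ext x; simp [Set.mem_preimage, D.iter_pred_s9]
    rw [heq]
    exact D.null_preimage_Tsymm (hA.preimage (D.iter_continuous_s9 _).measurable) ih

end DynSys
/-- **Lemma 1.8.** There are an inessential reduction `X̃` and a countable base
`(Oᵢ)` of the topology of `ℝ` such that each set `{x ∈ X̃ : ρ_μ(x,Tx) ∈ Oᵢ}`
is relatively clopen in `X̃`. -/
theorem exists_inessential_reduction_clopen_levels {X : Type*}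
    [TopologicalSpace X] [PolishSpace X] [MeasurableSpace X] [BorelSpace X]
    (D : DynSys X) :
    ∃ (X' : Set X) (O : ℕ → Set ℝ), D.InessRed X' ∧
      (∀ i, IsOpen (O i)) ∧
      (∀ U : Set ℝ, IsOpen U → ∀ t ∈ U, ∃ i, t ∈ O i ∧ O i ⊆ U) ∧
      ∀ i, IsClopen {x : ↥X' | Real.log (D.ω ↑x) ∈ O i} := by
  classical
  haveI := D.prob
  set f : X → ℝ := fun x => Real.log (D.ω x) with hfdef
  have fcont : Continuous f := by
    rw [continuous_iff_continuousAt]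
    intro x
    exact (Real.continuousAt_log (D.ωPos x).ne').comp D.ωCont.continuousAt
  -- the countable set of "bad" values
  have hbad1 : Set.Countable {a : ℝ | 0 < D.μ {x | f x = a}} :=
    MeasureTheory.Measure.countable_meas_level_set_pos fcont.measurable
  have hbad2 : Set.Countable {a : ℝ | (interior (f ⁻¹' {a})).Nonempty} := by
    have hdisj : Set.PairwiseDisjoint {a : ℝ | (interior (f ⁻¹' {a})).Nonempty}
        (fun a : ℝ => f ⁻¹' {a}) := fun a _ b _ hab =>
      Disjoint.preimage f (Set.disjoint_singleton.2 hab)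
    exact hdisj.countable_of_nonempty_interior (fun a ha => ha)
  -- a countable dense set of good values
  have hgood : Dense ({a : ℝ | 0 < D.μ {x | f x = a}} ∪
      {a : ℝ | (interior (f ⁻¹' {a})).Nonempty})ᶜ :=
    Set.Countable.dense_compl ℝ (hbad1.union hbad2)
  obtain ⟨Eset, hEsub, hEc, hEd⟩ := hgood.exists_countable_dense_subset
  have hEne : Eset.Nonempty := hEd.nonempty
  obtain ⟨e, he⟩ := hEc.exists_eq_range hEne
  have heEgood : ∀ k : ℕ, ¬ (0 < D.μ {x | f x = e k}) ∧ interior (f ⁻¹' {e k}) = ∅ := by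
    intro k
    have hk : e k ∈ Eset := he ▸ Set.mem_range_self k
    have := hEsub hk
    simp only [Set.mem_compl_iff, Set.mem_union, Set.mem_setOf_eq, not_or] at this
    exact ⟨this.1, Set.not_nonempty_iff_eq_empty.mp this.2⟩
  -- the bad set to remove
  set Nset : Set X := ⋃ k : ℕ, f ⁻¹' {e k} with hNdef
  have hNmeas : MeasurableSet Nset :=
    MeasurableSet.iUnion fun k => (isClosed_singleton.preimage fcont).measurableSet
  have hNnull : D.μ Nset = 0 := by
    apply MeasureTheory.measure_iUnion_null
    intro k
    have := (heEgood k).1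
    rw [not_lt, nonpos_iff_eq_zero] at this
    exact this
  set X' : Set X := ⋂ n : ℤ, D.iter n ⁻¹' Nsetᶜ with hX'def
  -- membership characterization
  have hX'mem : ∀ x : X, x ∈ X' ↔ ∀ (n : ℤ) (k : ℕ), f (D.iter n x) ≠ e k := by
    intro x
    simp only [hX'def, Set.mem_iInter, Set.mem_preimage, Set.mem_compl_iff, hNdef,
      Set.mem_iUnion, Set.mem_singleton_iff, not_exists]
  -- basic facts for each n, k
  letI := TopologicalSpace.upgradeIsCompletelyMetrizable X
  have hopen : ∀ (n : ℤ) (k : ℕ), IsOpen (D.iter n ⁻¹' (f ⁻¹' {e k})ᶜ) := fun n k =>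
    ((isClosed_singleton.preimage fcont).isOpen_compl).preimage (D.iter_continuous_s9 n)
  have hdense : ∀ (n : ℤ) (k : ℕ), Dense (D.iter n ⁻¹' (f ⁻¹' {e k})ᶜ) := by
    intro n k
    have h1 : Dense (f ⁻¹' {e k})ᶜ := by
      rw [← interior_eq_empty_iff_dense_compl]
      exact (heEgood k).2
    exact h1.preimage (D.iter_isOpenMap n)
  have hX'eq : X' = ⋂ p : ℤ × ℕ, D.iter p.1 ⁻¹' (f ⁻¹' {e p.2})ᶜ := by
    ext x
    rw [hX'mem x]
    simp only [Set.mem_iInter, Set.mem_preimage, Set.mem_compl_iff, Set.mem_singleton_iff,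
      Prod.forall]
  have hX'dense : Dense X' := by
    rw [hX'eq]
    exact dense_iInter_of_Gδ (fun p => (hopen p.1 p.2).isGδ) (fun p => hdense p.1 p.2)
  have hX'gdelta : IsGδ X' := by
    rw [hX'eq]
    exact IsGδ.iInter fun p => (hopen p.1 p.2).isGδ
  have hX'meas : MeasurableSet X' :=
    MeasurableSet.iInter fun n => hNmeas.compl.preimage (D.iter_continuous_s9 n).measurable
  have hX'full : D.μ X' = 1 := by
    have hcompl : D.μ X'ᶜ = 0 := by
      rw [hX'def, Set.compl_iInter]
      apply MeasureTheory.measure_iUnion_null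
      intro n
      have hcNc : (D.iter n ⁻¹' Nsetᶜ)ᶜ = D.iter n ⁻¹' Nset := by
        rw [Set.preimage_compl, compl_compl]
      rw [hcNc]
      exact D.null_preimage_iter hNmeas hNnull n
    have := MeasureTheory.measure_add_measure_compl (μ := D.μ) hX'meas
    rw [hcompl, add_zero, MeasureTheory.measure_univ] at this
    exact this
  have hX'inv : (⇑D.T) ⁻¹' X' = X' := by
    ext x
    simp only [Set.mem_preimage]
    rw [hX'mem x, hX'mem (D.T x)]
    constructor
    · intro h n k
      have := h (n - 1) k
      rwa [D.iter_pred_s9, Homeomorph.symm_apply_apply] at this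
    · intro h n k
      have := h (n + 1) k
      rwa [D.iter_succ_s9] at this
  -- the base of intervals
  set O : ℕ → Set ℝ := fun n => Set.Ioo (e n.unpair.1) (e n.unpair.2) with hOdef
  refine ⟨X', O, ⟨hX'inv, hX'dense, hX'gdelta, hX'full⟩, fun i => isOpen_Ioo, ?_, ?_⟩
  · -- base property
    intro U hU t ht
    obtain ⟨δ, hδpos, hball⟩ := Metric.isOpen_iff.mp hU t ht
    obtain ⟨p, hpE, hp⟩ := hEd.exists_mem_open isOpen_Ioo
      (⟨t - δ / 2, by constructor <;> [linarith; linarith]⟩ : (Set.Ioo (t - δ) t).Nonempty)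
    obtain ⟨q, hqE, hq⟩ := hEd.exists_mem_open isOpen_Ioo
      (⟨t + δ / 2, by constructor <;> [linarith; linarith]⟩ : (Set.Ioo t (t + δ)).Nonempty)
    rw [he] at hpE hqE
    obtain ⟨ip, hip⟩ := hpE
    obtain ⟨iq, hiq⟩ := hqE
    refine ⟨Nat.pair ip iq, ?_, ?_⟩
    · simp only [hOdef, Nat.unpair_pair, hip, hiq]
      exact ⟨hp.2, hq.1⟩
    · intro y hy
      simp only [hOdef, Nat.unpair_pair, hip, hiq, Set.mem_Ioo] at hy
      apply hball
      rw [Real.ball_eq_Ioo]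
      exact ⟨lt_of_le_of_lt (by linarith [hp.1]) hy.1,
        lt_of_lt_of_le hy.2 (by linarith [hq.2])⟩
  · -- clopen levels
    intro i
    set p := e i.unpair.1
    set q := e i.unpair.2
    have hO : O i = Set.Ioo p q := rfl
    constructor
    · -- closed
      rw [← isOpen_compl_iff]
      have hcompl_eq : {x : ↥X' | Real.log (D.ω ↑x) ∈ O i}ᶜ =
          (fun x : ↥X' => f ↑x) ⁻¹' (Set.Iio p ∪ Set.Ioi q) := by
        ext ⟨x, hx⟩
        have hxmem := (hX'mem x).mp hx
        have hne_p : f x ≠ p := by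
          have := hxmem 0 i.unpair.1
          rwa [D.iter_zero_s9] at this
        have hne_q : f x ≠ q := by
          have := hxmem 0 i.unpair.2
          rwa [D.iter_zero_s9] at this
        simp only [Set.mem_compl_iff, Set.mem_setOf_eq, hO, Set.mem_Ioo, Set.mem_preimage,
          Set.mem_union, Set.mem_Iio, Set.mem_Ioi, hfdef, not_and, not_lt]
        constructor
        · intro h
          by_cases hp : p < Real.log (D.ω x)
          · exact Or.inr (lt_of_le_of_ne (h hp) (Ne.symm hne_q))
          · exact Or.inl (lt_of_le_of_ne (not_lt.mp hp) hne_p)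
        · intro h hp
          rcases h with h | h
          · exact absurd hp (not_lt.mpr h.le)
          · exact h.le
      rw [hcompl_eq]
      exact (isOpen_Iio.union isOpen_Ioi).preimage (fcont.comp continuous_subtype_val)
    · -- open
      have : {x : ↥X' | Real.log (D.ω ↑x) ∈ O i} = (fun x : ↥X' => f ↑x) ⁻¹' O i := rfl
      rw [this]
      exact isOpen_Ioo.preimage (fcont.comp continuous_subtype_val)
end

section
/- Let (X, μ, T) be a dynamical system with X 0-dimensional. Given ε > 0 and an integer N > 0, there is a clopen subset A ⊂ X such that the subsets TⁱA, i = 0, …, N, are pairwise disjoint and μ(X ∖ ⨆_{i=0}^N TⁱA) < ε. -/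
open MeasureTheory Topology

namespace DynSys

variable {X Y : Type*} [TopologicalSpace X] [MeasurableSpace X]
  [TopologicalSpace Y] [MeasurableSpace Y]

/-! ### Auxiliary development for the topological Rokhlin lemma -/

section Aux

open Set Filter

variable (D : DynSys X)

/-- The `k`-th iterate as an equivalence. -/
noncomputable def itE (k : ℤ) : X ≃ X := D.T.toEquiv ^ k

lemma iter_eq_itE (k : ℤ) (x : X) : D.iter k x = D.itE k x := rfl

lemma itE_add_apply (a b : ℤ) (x : X) : D.itE (a + b) x = D.itE a (D.itE b x) := by
  rw [itE, itE, itE, zpow_add]; rfl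

lemma itE_zero_apply (x : X) : D.itE 0 x = x := by
  simp [itE]

lemma itE_one_apply (x : X) : D.itE 1 x = D.T x := by
  simp [itE]

lemma itE_neg_one_apply (x : X) : D.itE (-1) x = D.T.symm x := by
  simp only [itE, zpow_neg, zpow_one]
  rfl

lemma itE_cancel (k : ℤ) (x : X) : D.itE (-k) (D.itE k x) = x := by
  rw [← itE_add_apply, neg_add_cancel, itE_zero_apply]

lemma itE_cancel' (k : ℤ) (x : X) : D.itE k (D.itE (-k) x) = x := by
  rw [← itE_add_apply, add_neg_cancel, itE_zero_apply]

lemma continuous_itE (k : ℤ) : Continuous (D.itE k) := by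
  induction k using Int.induction_on with
  | zero => simpa [funext (D.itE_zero_apply)] using continuous_id'
  | succ n ih =>
      have h : ⇑(D.itE (n + 1)) = fun x => D.itE n (D.T x) := by
        funext x
        rw [itE_add_apply, itE_one_apply]
      rw [h]; exact ih.comp D.T.continuous
  | pred n ih =>
      have h : ⇑(D.itE (-(n:ℤ) - 1)) = fun x => D.itE (-n) (D.T.symm x) := by
        funext x
        rw [sub_eq_add_neg, itE_add_apply, itE_neg_one_apply]
      rw [h]; exact ih.comp D.T.symm.continuous

variable [BorelSpace X]

lemma measurable_itE (k : ℤ) : Measurable (D.itE k) :=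
  (D.continuous_itE k).measurable

lemma measurableSet_itE_preimage (k : ℤ) {E : Set X} (hE : MeasurableSet E) :
    MeasurableSet (D.itE k ⁻¹' E) :=
  (D.measurable_itE k) hE

/-- The key non-singularity fact for `T.symm`. -/
lemma null_symm_preimage {S : Set X} (hS : MeasurableSet S) :
    D.μ (⇑D.T.symm ⁻¹' S) = 0 ↔ D.μ S = 0 := by
  have h1 : D.μ (⇑D.T.symm ⁻¹' S) = ∫⁻ x in S, ENNReal.ofReal (D.ω x) ∂D.μ := by
    rw [← Measure.map_apply D.T.symm.continuous.measurable hS, D.rnDeriv,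
      withDensity_apply _ hS]
  rw [h1]
  constructor
  · intro h
    have hm : Measurable fun x => ENNReal.ofReal (D.ω x) :=
      ENNReal.measurable_ofReal.comp D.ωCont.measurable
    rw [lintegral_eq_zero_iff hm, Filter.EventuallyEq, ae_iff] at h
    have huniv : {a | ¬ (ENNReal.ofReal (D.ω a) = (0 : X → ENNReal) a)} = Set.univ := by
      ext x
      simp [ENNReal.ofReal_eq_zero, not_le, D.ωPos x]
    rw [huniv] at h
    simpa [Measure.restrict_apply_univ] using h
  · intro h
    exact setLIntegral_measure_zero _ _ h

lemma null_T_preimage_s10 {E : Set X} (hE : MeasurableSet E) :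
    D.μ (⇑D.T ⁻¹' E) = 0 ↔ D.μ E = 0 := by
  have hkey := D.null_symm_preimage (D.T.continuous.measurable hE)
  have h2 : ⇑D.T.symm ⁻¹' (⇑D.T ⁻¹' E) = E := by
    ext x; simp
  rw [h2] at hkey
  exact hkey.symm

lemma null_itE_preimage (k : ℤ) {E : Set X} (hE : MeasurableSet E) :
    D.μ (D.itE k ⁻¹' E) = 0 ↔ D.μ E = 0 := by
  induction k using Int.induction_on with
  | zero =>
      have : D.itE 0 ⁻¹' E = E := by ext x; simp [itE_zero_apply]
      rw [this]
  | succ n ih =>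
      have h : D.itE (n + 1) ⁻¹' E = ⇑D.T ⁻¹' (D.itE n ⁻¹' E) := by
        ext x
        simp only [mem_preimage]
        rw [itE_add_apply, itE_one_apply]
      rw [h, D.null_T_preimage_s10 (D.measurableSet_itE_preimage n hE)]
      exact ih
  | pred n ih =>
      have h : D.itE (-(n:ℤ) - 1) ⁻¹' E = ⇑D.T.symm ⁻¹' (D.itE (-n) ⁻¹' E) := by
        ext x
        simp only [mem_preimage]
        rw [sub_eq_add_neg, itE_add_apply, itE_neg_one_apply]
      rw [h, D.null_symm_preimage (D.measurableSet_itE_preimage (-n) hE)]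
      exact ih

/-- No "atom-like" sets: every positive measure set splits. -/
lemma exists_split [SecondCountableTopology X] [T2Space X]
    {W : Set X} (hW : MeasurableSet W) (hpos : 0 < D.μ W) :
    ∃ S, MeasurableSet S ∧ S ⊆ W ∧ 0 < D.μ S ∧ D.μ S < D.μ W := by
  haveI := D.prob
  haveI : NullSingletonClass D.μ := D.noAtoms
  by_contra hcon
  push_neg at hcon
  obtain ⟨b, hbc, -, hb⟩ := TopologicalSpace.exists_countable_basis X
  have hdich : ∀ U ∈ b, D.μ (W ∩ U) = 0 ∨ D.μ (W ∩ U) = D.μ W := by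
    intro U hU
    rcases eq_or_ne (D.μ (W ∩ U)) 0 with h | h
    · exact Or.inl h
    · refine Or.inr (le_antisymm (measure_mono inter_subset_left) ?_)
      exact hcon _ (hW.inter (hb.isOpen hU).measurableSet) inter_subset_left
        (pos_iff_ne_zero.mpr h)
  classical
  set bad : Set (Set X) := {U ∈ b | D.μ (W ∩ U) = 0} with hbad
  set C : Set X := W \ ⋃ U ∈ bad, U with hC
  have hCnull : D.μ (W ∩ ⋃ U ∈ bad, U) = 0 := by
    rw [inter_iUnion₂]
    refine (measure_biUnion_null_iff (hbc.mono (sep_subset _ _))).mpr ?_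
    intro U hU
    exact hU.2
  have hCμ : D.μ C = D.μ W := measure_diff_null' hCnull
  have hsub : C.Subsingleton := by
    intro x hx y hy
    by_contra hxy
    obtain ⟨u, v, hu, hv, hxu, hyv, huv⟩ := t2_separation hxy
    obtain ⟨U, hUb, hxU, hUu⟩ := hb.exists_subset_of_mem_open hxu hu
    obtain ⟨V, hVb, hyV, hVv⟩ := hb.exists_subset_of_mem_open hyv hv
    have hUfull : D.μ (W ∩ U) = D.μ W := by
      rcases hdich U hUb with h | h
      · exact absurd (mem_biUnion (mem_sep hUb h) hxU) hx.2
      · exact h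
    have hVfull : D.μ (W ∩ V) = D.μ W := by
      rcases hdich V hVb with h | h
      · exact absurd (mem_biUnion (mem_sep hVb h) hyV) hy.2
      · exact h
    have hdisj : Disjoint (W ∩ U) (W ∩ V) :=
      (huv.mono hUu hVv).mono inter_subset_right inter_subset_right
    have hle : D.μ (W ∩ U) + D.μ (W ∩ V) ≤ D.μ W := by
      rw [← measure_union hdisj (hW.inter (hb.isOpen hVb).measurableSet)]
      exact measure_mono (union_subset inter_subset_left inter_subset_left)
    rw [hUfull, hVfull] at hle
    have hfin : D.μ W ≠ ⊤ := measure_ne_top _ _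
    have h3 : D.μ W ≤ 0 :=
      (ENNReal.add_le_add_iff_left hfin).mp (by simpa using hle)
    exact hpos.ne' (le_antisymm h3 zero_le)
  have h0 : D.μ C = 0 := hsub.measure_zero _
  rw [hCμ] at h0
  exact hpos.ne' h0

/-- Hopf: a wandering measurable set is null. -/
lemma wandering_null [SecondCountableTopology X] [T2Space X]
    {W : Set X} (hW : MeasurableSet W)
    (hw : ∀ k : ℤ, k ≠ 0 → ∀ x ∈ W, D.itE k x ∉ W) : D.μ W = 0 := by
  haveI := D.prob
  by_contra h
  have hpos : 0 < D.μ W := pos_iff_ne_zero.mpr h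
  obtain ⟨S, hSm, hSW, hS0, hSlt⟩ := D.exists_split hW hpos
  have hWS : 0 < D.μ (W \ S) := by
    by_contra h0
    push_neg at h0
    have h0' : D.μ (W \ S) = 0 := le_antisymm h0 zero_le
    have : D.μ W ≤ D.μ S := by
      calc D.μ W ≤ D.μ (S ∪ (W \ S)) := measure_mono (fun x hx => by
            by_cases hxS : x ∈ S
            · exact Or.inl hxS
            · exact Or.inr ⟨hx, hxS⟩)
        _ ≤ D.μ S + D.μ (W \ S) := measure_union_le _ _
        _ = D.μ S := by rw [h0', add_zero]
    exact absurd (lt_of_lt_of_le hSlt this) (lt_irrefl _)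
  have hinv : ∀ S₀ : Set X, (⇑D.T) ⁻¹' (⋃ k : ℤ, D.itE k ⁻¹' S₀) = ⋃ k : ℤ, D.itE k ⁻¹' S₀ := by
    intro S₀
    ext x
    simp only [mem_preimage, mem_iUnion]
    constructor
    · rintro ⟨k, hk⟩
      refine ⟨k + 1, ?_⟩
      rwa [itE_add_apply, itE_one_apply]
    · rintro ⟨k, hk⟩
      refine ⟨k - 1, ?_⟩
      rw [sub_eq_add_neg, itE_add_apply, itE_neg_one_apply]
      simpa [Homeomorph.symm_apply_apply] using hk
  have hmeas : ∀ (S₀ : Set X), MeasurableSet S₀ → MeasurableSet (⋃ k : ℤ, D.itE k ⁻¹' S₀) :=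
    fun S₀ hS₀ => MeasurableSet.iUnion fun k => D.measurableSet_itE_preimage k hS₀
  have hone : ∀ (S₀ : Set X), MeasurableSet S₀ → 0 < D.μ S₀ →
      D.μ (⋃ k : ℤ, D.itE k ⁻¹' S₀) = 1 := by
    intro S₀ hS₀ hpos₀
    rcases D.ergodic _ (hmeas S₀ hS₀) (hinv S₀) with h1 | h1
    · exfalso
      have hsub : S₀ ⊆ ⋃ k : ℤ, D.itE k ⁻¹' S₀ := by
        intro x hx
        exact mem_iUnion.mpr ⟨0, by simpa [itE_zero_apply] using hx⟩
      have := measure_mono_null hsub h1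
      exact hpos₀.ne' this
    · exact h1
  have hV : D.μ (⋃ k : ℤ, D.itE k ⁻¹' S) = 1 := hone S hSm hS0
  have hV' : D.μ (⋃ k : ℤ, D.itE k ⁻¹' (W \ S)) = 1 := hone _ (hW.diff hSm) hWS
  have hdisj : (⋃ k : ℤ, D.itE k ⁻¹' S) ∩ (⋃ k : ℤ, D.itE k ⁻¹' (W \ S)) = ∅ := by
    ext x
    simp only [mem_inter_iff, mem_iUnion, mem_preimage, mem_empty_iff_false, iff_false]
    rintro ⟨⟨k, hk⟩, j, hj⟩
    have hkj : k ≠ j := by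
      rintro rfl
      exact hj.2 hk
    have hmem : D.itE (k - j) (D.itE j x) = D.itE k x := by
      rw [← itE_add_apply, sub_add_cancel]
    exact hw (k - j) (sub_ne_zero.mpr hkj) (D.itE j x) hj.1 (by rw [hmem]; exact hSW hk)
  have hle : (2 : ENNReal) ≤ 1 := by
    have := measure_union_add_inter (μ := D.μ) (⋃ k : ℤ, D.itE k ⁻¹' S)
      (hmeas _ (hW.diff hSm))
    rw [hdisj, hV, hV'] at this
    simp only [measure_empty, add_zero] at this
    calc (2 : ENNReal) = 1 + 1 := by norm_num
      _ = D.μ ((⋃ k : ℤ, D.itE k ⁻¹' S) ∪ ⋃ k : ℤ, D.itE k ⁻¹' (W \ S)) := this.symm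
      _ ≤ 1 := prob_le_one
  norm_num at hle

/-- Forward non-returning points of `B`. -/
def nonRet (B : Set X) : Set X := B ∩ ⋂ n : ℕ, (D.itE ((n : ℤ) + 1) ⁻¹' B)ᶜ

/-- Backward non-returning points of `B`. -/
def nonRet' (B : Set X) : Set X := B ∩ ⋂ n : ℕ, (D.itE (-((n : ℤ) + 1)) ⁻¹' B)ᶜ

lemma mem_nonRet {B : Set X} {x : X} :
    x ∈ D.nonRet B ↔ x ∈ B ∧ ∀ k : ℤ, 0 < k → D.itE k x ∉ B := by
  simp only [nonRet, mem_inter_iff, mem_iInter, mem_compl_iff, mem_preimage]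
  constructor
  · rintro ⟨hB, h⟩
    refine ⟨hB, fun k hk => ?_⟩
    obtain ⟨n, rfl⟩ : ∃ n : ℕ, k = (n : ℤ) + 1 := ⟨(k - 1).toNat, by omega⟩
    exact h n
  · rintro ⟨hB, h⟩
    exact ⟨hB, fun n => h _ (by omega)⟩

lemma mem_nonRet' {B : Set X} {x : X} :
    x ∈ D.nonRet' B ↔ x ∈ B ∧ ∀ k : ℤ, k < 0 → D.itE k x ∉ B := by
  simp only [nonRet', mem_inter_iff, mem_iInter, mem_compl_iff, mem_preimage]
  constructor
  · rintro ⟨hB, h⟩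
    refine ⟨hB, fun k hk => ?_⟩
    obtain ⟨n, rfl⟩ : ∃ n : ℕ, k = -((n : ℤ) + 1) := ⟨(-k - 1).toNat, by omega⟩
    exact h n
  · rintro ⟨hB, h⟩
    exact ⟨hB, fun n => h _ (by omega)⟩

lemma measurableSet_nonRet {B : Set X} (hB : MeasurableSet B) :
    MeasurableSet (D.nonRet B) :=
  hB.inter (MeasurableSet.iInter fun n => (D.measurableSet_itE_preimage _ hB).compl)

lemma measurableSet_nonRet' {B : Set X} (hB : MeasurableSet B) :
    MeasurableSet (D.nonRet' B) :=
  hB.inter (MeasurableSet.iInter fun n => (D.measurableSet_itE_preimage _ hB).compl)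

lemma nonRet_null [SecondCountableTopology X] [T2Space X]
    {B : Set X} (hB : MeasurableSet B) : D.μ (D.nonRet B) = 0 := by
  refine D.wandering_null (D.measurableSet_nonRet hB) ?_
  intro k hk x hx hx'
  rw [D.mem_nonRet] at hx hx'
  rcases lt_or_gt_of_ne hk with hneg | hpos
  · have : D.itE (-k) (D.itE k x) ∈ B := by
      rw [D.itE_cancel]
      exact hx.1
    exact hx'.2 (-k) (by omega) this
  · exact hx.2 k hpos hx'.1

lemma nonRet'_null [SecondCountableTopology X] [T2Space X]
    {B : Set X} (hB : MeasurableSet B) : D.μ (D.nonRet' B) = 0 := by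
  refine D.wandering_null (D.measurableSet_nonRet' hB) ?_
  intro k hk x hx hx'
  rw [D.mem_nonRet'] at hx hx'
  rcases lt_or_gt_of_ne hk with hneg | hpos
  · exact hx.2 k hneg hx'.1
  · have : D.itE (-k) (D.itE k x) ∈ B := by
      rw [D.itE_cancel]
      exact hx.1
    exact hx'.2 (-k) (by omega) this

/-- Points of `B` with first return time exactly `n`. -/
def ret (B : Set X) (n : ℕ) : Set X :=
  B ∩ (D.itE (n : ℤ) ⁻¹' B) ∩ ⋂ j ∈ Finset.Ioo 0 n, (D.itE (j : ℤ) ⁻¹' B)ᶜ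

lemma mem_ret {B : Set X} {n : ℕ} {x : X} :
    x ∈ D.ret B n ↔ x ∈ B ∧ D.itE (n : ℤ) x ∈ B ∧
      ∀ j : ℕ, 0 < j → j < n → D.itE (j : ℤ) x ∉ B := by
  simp only [ret, mem_inter_iff, mem_iInter, mem_compl_iff, mem_preimage, Finset.mem_Ioo]
  constructor
  · rintro ⟨⟨h1, h2⟩, h3⟩
    exact ⟨h1, h2, fun j hj hjn => h3 j ⟨hj, hjn⟩⟩
  · rintro ⟨h1, h2, h3⟩
    exact ⟨⟨h1, h2⟩, fun j hj => h3 j hj.1 hj.2⟩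

lemma isClopen_ret {B : Set X} (hB : IsClopen B) (n : ℕ) : IsClopen (D.ret B n) :=
  (hB.inter (hB.preimage (D.continuous_itE _))).inter
    (isClopen_biInter_finset fun _ _ => (hB.preimage (D.continuous_itE _)).compl)

/-- The floor at height `m` over the base `ret B n`. -/
def flr (B : Set X) (n m : ℕ) : Set X := D.itE (-(m : ℤ)) ⁻¹' D.ret B n

lemma isClopen_flr {B : Set X} (hB : IsClopen B) (n m : ℕ) : IsClopen (D.flr B n m) :=
  (D.isClopen_ret hB n).preimage (D.continuous_itE _)

lemma measurableSet_flr [BorelSpace X] {B : Set X} (hB : IsClopen B) (n m : ℕ) :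
    MeasurableSet (D.flr B n m) :=
  (D.isClopen_flr hB n m).1.measurableSet

lemma preimage_flr (B : Set X) (n m i : ℕ) :
    D.itE (-(i : ℤ)) ⁻¹' D.flr B n m = D.flr B n (m + i) := by
  ext x
  simp only [flr, mem_preimage]
  have hexp : -(m:ℤ) + -(i:ℤ) = -(((m + i : ℕ)) : ℤ) := by push_cast; ring
  rw [← itE_add_apply, hexp]

/-- Distinct floors are disjoint. -/
lemma flr_eq_of_mem {B : Set X} {n m n' m' : ℕ} (hm : m < n) (hm' : m' < n')
    {x : X} (h1 : x ∈ D.flr B n m) (h2 : x ∈ D.flr B n' m') : n = n' ∧ m = m' := by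
  simp only [flr, mem_preimage] at h1 h2
  rw [D.mem_ret] at h1 h2
  -- first, the heights agree
  have key : ∀ (a b a' b' : ℕ), a < b → a' < b' →
      (D.itE (-(a:ℤ)) x ∈ B ∧ D.itE (b:ℤ) (D.itE (-(a:ℤ)) x) ∈ B ∧
        ∀ j : ℕ, 0 < j → j < b → D.itE (j:ℤ) (D.itE (-(a:ℤ)) x) ∉ B) →
      (∀ j : ℕ, 0 < j → j < b' → D.itE (j:ℤ) (D.itE (-(a':ℤ)) x) ∉ B) →
      ¬ a < a' := by
    intro a b a' b' hab ha'b' hA hBua hlt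
    have hexp : ((a' - a : ℕ) : ℤ) + -(a':ℤ) = -(a:ℤ) := by omega
    have hj : D.itE ((a' - a : ℕ) : ℤ) (D.itE (-(a':ℤ)) x) = D.itE (-(a:ℤ)) x := by
      rw [← itE_add_apply, hexp]
    exact hBua (a' - a) (by omega) (by omega) (hj ▸ hA.1)
  have hmm' : m = m' := by
    by_contra hne
    rcases lt_or_gt_of_ne hne with h | h
    · exact key m n m' n' hm hm' h1 h2.2.2 h
    · exact key m' n' m n hm' hm h2 h1.2.2 h
  subst hmm'
  have hnn' : n = n' := by
    by_contra hne
    rcases lt_or_gt_of_ne hne with h | h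
    · exact h2.2.2 n (by omega) h h1.2.1
    · exact h1.2.2 n' (by omega) h h2.2.1
  exact ⟨hnn', rfl⟩

/-- The full orbit of a positive measure set has full measure. -/
lemma orbit_full [SecondCountableTopology X] [T2Space X]
    {S : Set X} (hS : MeasurableSet S) (hpos : 0 < D.μ S) :
    D.μ (⋃ k : ℤ, D.itE k ⁻¹' S) = 1 := by
  haveI := D.prob
  have hinv : (⇑D.T) ⁻¹' (⋃ k : ℤ, D.itE k ⁻¹' S) = ⋃ k : ℤ, D.itE k ⁻¹' S := by
    ext x
    simp only [mem_preimage, mem_iUnion]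
    constructor
    · rintro ⟨k, hk⟩
      refine ⟨k + 1, ?_⟩
      rwa [itE_add_apply, itE_one_apply]
    · rintro ⟨k, hk⟩
      refine ⟨k - 1, ?_⟩
      rw [sub_eq_add_neg, itE_add_apply, itE_neg_one_apply]
      simpa [Homeomorph.symm_apply_apply] using hk
  have hmeas : MeasurableSet (⋃ k : ℤ, D.itE k ⁻¹' S) :=
    MeasurableSet.iUnion fun k => D.measurableSet_itE_preimage k hS
  rcases D.ergodic _ hmeas hinv with h1 | h1
  · exfalso
    have hsub : S ⊆ ⋃ k : ℤ, D.itE k ⁻¹' S := fun x hx =>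
      mem_iUnion.mpr ⟨0, by simpa [itE_zero_apply] using hx⟩
    exact hpos.ne' (measure_mono_null hsub h1)
  · exact h1

/-- The Kakutani tower over a clopen positive measure base has full measure. -/
lemma tower_ae [SecondCountableTopology X] [T2Space X]
    {B : Set X} (hB : IsClopen B) (hBne : B.Nonempty) :
    D.μ (⋃ n : ℕ, ⋃ m ∈ Finset.range n, D.flr B n m) = 1 := by
  classical
  haveI := D.prob
  have hBm : MeasurableSet B := hB.1.measurableSet
  set Bad : Set X := ⋃ k : ℤ, D.itE k ⁻¹' (D.nonRet B ∪ D.nonRet' B) with hBadDef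
  have hBadNull : D.μ Bad = 0 := by
    refine measure_iUnion_null fun k => ?_
    rw [D.null_itE_preimage k ((D.measurableSet_nonRet hBm).union (D.measurableSet_nonRet' hBm))]
    exact measure_union_null (D.nonRet_null hBm) (D.nonRet'_null hBm)
  have hQ : D.μ (⋃ k : ℤ, D.itE k ⁻¹' B) = 1 :=
    D.orbit_full hBm (D.fullSupport B hB.2 hBne)
  have hsub : (⋃ k : ℤ, D.itE k ⁻¹' B) \ Bad ⊆
      ⋃ n : ℕ, ⋃ m ∈ Finset.range n, D.flr B n m := by
    rintro x ⟨hxQ, hxBad⟩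
    have hnotbad : ∀ k : ℤ, D.itE k x ∉ D.nonRet B ∧ D.itE k x ∉ D.nonRet' B := by
      intro k
      constructor
      · intro hmem
        exact hxBad (mem_iUnion.mpr ⟨k, Or.inl hmem⟩)
      · intro hmem
        exact hxBad (mem_iUnion.mpr ⟨k, Or.inr hmem⟩)
    -- Step A : the past orbit of x visits B
    have hA : ∃ j : ℕ, D.itE (-(j:ℤ)) x ∈ B := by
      obtain ⟨k, hk⟩ := mem_iUnion.mp hxQ
      have main : ∀ n : ℕ, ∀ k : ℤ, k.toNat ≤ n → D.itE k x ∈ B →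
          ∃ j : ℕ, D.itE (-(j:ℤ)) x ∈ B := by
        intro n
        induction n with
        | zero =>
            intro k hk0 hkB
            refine ⟨(-k).toNat, ?_⟩
            have h : (-(((-k).toNat : ℕ) : ℤ)) = k := by omega
            rwa [h]
        | succ n ih =>
            intro k hkn hkB
            by_cases hk0 : k ≤ 0
            · refine ⟨(-k).toNat, ?_⟩
              have h : (-(((-k).toNat : ℕ) : ℤ)) = k := by omega
              rwa [h]
            · push_neg at hk0
              have hnb := (hnotbad k).2
              rw [D.mem_nonRet'] at hnb
              push_neg at hnb
              obtain ⟨k', hk'neg, hk'B⟩ := hnb hkB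
              have hmem : D.itE (k' + k) x ∈ B := by
                rw [itE_add_apply]
                exact hk'B
              exact ih (k' + k) (by omega) hmem
      exact main k.toNat k le_rfl hk
    -- Step B : the first past visit
    set k₀ := Nat.find hA with hk₀def
    have hk₀ : D.itE (-(k₀:ℤ)) x ∈ B := Nat.find_spec hA
    set b := D.itE (-(k₀:ℤ)) x with hbdef
    -- Step C : b returns to B
    have hbnb := (hnotbad (-(k₀:ℤ))).1
    rw [D.mem_nonRet] at hbnb
    push_neg at hbnb
    obtain ⟨r, hrpos, hrB⟩ := hbnb hk₀
    have hq : ∃ m : ℕ, D.itE ((m:ℤ)+1) b ∈ B := by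
      refine ⟨(r-1).toNat, ?_⟩
      have h : ((((r-1).toNat : ℕ)) : ℤ) + 1 = r := by omega
      rwa [h]
    set r₁ := Nat.find hq with hr₁def
    have hr₁ : D.itE ((r₁:ℤ)+1) b ∈ B := Nat.find_spec hq
    have hret : b ∈ D.ret B (r₁ + 1) := by
      rw [D.mem_ret]
      refine ⟨hk₀, ?_, ?_⟩
      · have h : (((r₁ + 1 : ℕ)) : ℤ) = (r₁:ℤ) + 1 := by push_cast; ring
        rwa [h]
      · intro j hj hjn hjB
        refine Nat.find_min hq (show j - 1 < r₁ by omega) ?_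
        have h : (((j-1 : ℕ)) : ℤ) + 1 = (j:ℤ) := by omega
        rwa [h]
    have hk₀n : k₀ < r₁ + 1 := by
      by_contra hle
      push_neg at hle
      have hb2 : D.itE (((r₁ + 1 : ℕ)):ℤ) b ∈ B := (D.mem_ret.mp hret).2.1
      have hexp : (((r₁ + 1 : ℕ)):ℤ) + -(k₀:ℤ) = -(((k₀ - (r₁+1) : ℕ)):ℤ) := by omega
      have h1 : D.itE (((r₁ + 1 : ℕ)):ℤ) b = D.itE (-(((k₀ - (r₁+1) : ℕ)):ℤ)) x := by
        rw [hbdef, ← itE_add_apply, hexp]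
      rw [h1] at hb2
      exact Nat.find_min hA (show k₀ - (r₁+1) < k₀ by omega) hb2
    refine mem_iUnion.mpr ⟨r₁ + 1, mem_iUnion₂.mpr ⟨k₀, Finset.mem_range.mpr hk₀n, ?_⟩⟩
    show D.itE (-(k₀:ℤ)) x ∈ D.ret B (r₁ + 1)
    rw [← hbdef]
    exact hret
  refine le_antisymm prob_le_one ?_
  calc (1:ENNReal) = D.μ ((⋃ k : ℤ, D.itE k ⁻¹' B) \ Bad) := by
        rw [measure_diff_null hBadNull, hQ]
    _ ≤ _ := measure_mono hsub

/-- Existence of a non-empty clopen set whose relevant iterates are all small. -/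
lemma exists_small_clopen [T1Space X] (hzd : ZeroDimensional X) (N : ℕ)
    {δ : ENNReal} (hδ : 0 < δ) :
    ∃ B : Set X, IsClopen B ∧ B.Nonempty ∧
      ∀ k ∈ Finset.Icc 1 N, D.μ (D.itE (k : ℤ) ⁻¹' B) < δ := by
  classical
  haveI := D.prob
  haveI : NullSingletonClass D.μ := D.noAtoms
  have hX : Nonempty X := by
    by_contra h
    rw [not_nonempty_iff] at h
    have h1 : D.μ Set.univ = 1 := measure_univ
    rw [Set.univ_eq_empty_iff.mpr h, measure_empty] at h1
    exact zero_ne_one h1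
  obtain ⟨x₀⟩ := hX
  obtain ⟨bb, hbbc, hbcl, hbas⟩ := hzd
  set F : Set (Set X) := {U ∈ bb | x₀ ∈ U} with hFdef
  have hFne : F.Nonempty := by
    obtain ⟨U, hU, hxU, -⟩ := hbas.exists_subset_of_mem_open (Set.mem_univ x₀) isOpen_univ
    exact ⟨U, hU, hxU⟩
  have hFc : F.Countable := hbbc.mono (Set.sep_subset _ _)
  haveI := hFc.to_subtype
  haveI : Nonempty F := hFne.to_subtype
  obtain ⟨f, hf⟩ := exists_surjective_nat F
  set Dn : ℕ → Set X := fun n => ⋂ i ∈ Finset.range (n+1), (f i : Set X) with hDnDef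
  have hDncl : ∀ n, IsClopen (Dn n) := fun n =>
    isClopen_biInter_finset fun i _ => hbcl _ (f i).2.1
  have hx₀ : ∀ n, x₀ ∈ Dn n := fun n => Set.mem_biInter fun i _ => (f i).2.2
  have hanti : Antitone Dn := by
    intro a c hac y hy
    simp only [hDnDef, Set.mem_iInter, Finset.mem_range] at hy ⊢
    intro i hi
    exact hy i (by omega)
  have hsing : (⋂ n, Dn n) ⊆ {x₀} := by
    intro y hy
    simp only [Set.mem_iInter] at hy
    by_contra hne
    have hyne : y ≠ x₀ := hne
    have hx₀mem : x₀ ∈ ({y}ᶜ : Set X) := by simpa using (Ne.symm hyne)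
    obtain ⟨U, hUb, hxU, hUsub⟩ := hbas.exists_subset_of_mem_open hx₀mem isOpen_compl_singleton
    obtain ⟨i, hi⟩ := hf ⟨U, hUb, hxU⟩
    have h2 : y ∈ (f i : Set X) := by
      have h3 := hy i
      simp only [hDnDef, Set.mem_iInter] at h3
      exact h3 i (Finset.self_mem_range_succ i)
    rw [hi] at h2
    exact (hUsub h2) rfl
  have hconv : ∀ k : ℕ, Filter.Tendsto (fun n => D.μ (D.itE (k:ℤ) ⁻¹' Dn n))
      Filter.atTop (nhds 0) := by
    intro k
    have h0 : D.μ (⋂ n, D.itE (k:ℤ) ⁻¹' Dn n) = 0 := by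
      rw [← Set.preimage_iInter]
      have hsub2 : D.itE (k:ℤ) ⁻¹' (⋂ n, Dn n) ⊆ {D.itE (-(k:ℤ)) x₀} := by
        intro z hz
        have := hsing hz
        simp only [Set.mem_singleton_iff] at this ⊢
        rw [← this, itE_cancel]
      exact measure_mono_null hsub2 (measure_singleton _)
    have ht := tendsto_measure_iInter_atTop (μ := D.μ)
      (s := fun n => D.itE (k:ℤ) ⁻¹' Dn n)
      (fun n => ((hDncl n).preimage (D.continuous_itE _)).1.measurableSet.nullMeasurableSet)
      (fun a c hac => Set.preimage_mono (hanti hac)) ⟨0, measure_ne_top _ _⟩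
    rw [h0] at ht
    exact ht
  have hev : ∀ᶠ n in Filter.atTop, ∀ k ∈ Finset.Icc 1 N,
      D.μ (D.itE (k:ℤ) ⁻¹' Dn n) < δ := by
    rw [Filter.eventually_all_finset]
    intro k _
    exact (hconv k).eventually (gt_mem_nhds hδ)
  obtain ⟨n, hn⟩ := hev.exists
  exact ⟨Dn n, hDncl n, ⟨x₀, hx₀ n⟩, hn⟩

end Aux

end DynSys

/-- **Lemma 1.10** (topological non-singular Rokhlin lemma). Given `ε > 0` and `N > 0`
there is a clopen set `A` with `A, TA, …, T^N A` pairwise disjoint covering `X` up to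
measure `ε`. -/
theorem topological_Rokhlin {X : Type*}
    [TopologicalSpace X] [PolishSpace X] [MeasurableSpace X] [BorelSpace X]
    (D : DynSys X) (hzd : ZeroDimensional X)
    (ε : ℝ) (hε : 0 < ε) (N : ℕ) (hN : 0 < N) :
    ∃ A : Set X, IsClopen A ∧
      (∀ i j : ℕ, i ≤ N → j ≤ N → i ≠ j →
        Disjoint ((fun x => D.iter (i : ℤ) x) '' A) ((fun x => D.iter (j : ℤ) x) '' A)) ∧
      D.μ (Set.univ \ ⋃ i ∈ Finset.range (N + 1), (fun x => D.iter (i : ℤ) x) '' A)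
        < ENNReal.ofReal ε := by
  classical
  haveI := D.prob
  have himg : ∀ (k : ℕ) (S : Set X),
      (fun x => D.iter (k:ℤ) x) '' S = D.itE (-(k:ℤ)) ⁻¹' S := by
    intro k S
    ext y
    constructor
    · rintro ⟨x, hx, rfl⟩
      have h : D.itE (-(k:ℤ)) (D.iter (k:ℤ) x) = x := D.itE_cancel _ _
      simpa [Set.mem_preimage, h] using hx
    · intro hy
      exact ⟨D.itE (-(k:ℤ)) y, hy, D.itE_cancel' _ _⟩
  -- choose a small clopen base B
  set ε' : ℝ := ε / (2 * N) with hε'def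
  have hε' : 0 < ε' := by positivity
  obtain ⟨B, hBcl, hBne, hBsmall⟩ := D.exists_small_clopen hzd N
      (δ := ENNReal.ofReal ε') (ENNReal.ofReal_pos.mpr hε')
  -- the Kakutani tower
  have htow := D.tower_ae hBcl hBne
  set Tinf : Set X := ⋃ n : ℕ, ⋃ m ∈ Finset.range n, D.flr B n m with hTinfDef
  set Tow : ℕ → Set X :=
    fun M => ⋃ n ∈ Finset.range (M+1), ⋃ m ∈ Finset.range n, D.flr B n m with hTowDef
  have hTowmono : Monotone Tow := by
    intro a c hac x hx
    obtain ⟨n, hn, hx⟩ := Set.mem_iUnion₂.mp hx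
    refine Set.mem_iUnion₂.mpr ⟨n, Finset.mem_range.mpr ?_, hx⟩
    have := Finset.mem_range.mp hn
    omega
  have hTowsub : ∀ M, Tow M ⊆ Tinf := by
    intro M x hx
    obtain ⟨n, hn, hx⟩ := Set.mem_iUnion₂.mp hx
    exact Set.mem_iUnion.mpr ⟨n, hx⟩
  have hTowU : ⋃ M, Tow M = Tinf := by
    refine Set.Subset.antisymm (Set.iUnion_subset fun M => hTowsub M) ?_
    intro x hx
    obtain ⟨n, hx⟩ := Set.mem_iUnion.mp hx
    obtain ⟨m, hm, hx⟩ := Set.mem_iUnion₂.mp hx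
    exact Set.mem_iUnion.mpr ⟨n, Set.mem_iUnion₂.mpr
      ⟨n, Finset.mem_range.mpr (by omega), Set.mem_iUnion₂.mpr ⟨m, hm, hx⟩⟩⟩
  have hTinfmeas : MeasurableSet Tinf :=
    MeasurableSet.iUnion fun n =>
      (Finset.range n).measurableSet_biUnion fun m _ => D.measurableSet_flr hBcl n m
  have hTowmeas : ∀ M, MeasurableSet (Tow M) := fun M =>
    (Finset.range (M+1)).measurableSet_biUnion fun n _ =>
      (Finset.range n).measurableSet_biUnion fun m _ => D.measurableSet_flr hBcl n m
  -- choose the height M of the finite tower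
  have hrem : Filter.Tendsto (fun M => D.μ (Tinf \ Tow M)) Filter.atTop (nhds 0) := by
    have h0 : (⋂ M, Tinf \ Tow M) = ∅ := by
      rw [← Set.diff_iUnion, hTowU, Set.diff_self]
    have ht := tendsto_measure_iInter_atTop (μ := D.μ) (s := fun M => Tinf \ Tow M)
      (fun M => (hTinfmeas.diff (hTowmeas M)).nullMeasurableSet)
      (fun a c hac => Set.diff_subset_diff_right (hTowmono hac))
      ⟨0, measure_ne_top _ _⟩
    rw [h0, measure_empty] at ht
    exact ht
  have hhalf : (0:ℝ) < ε / 2 := by positivity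
  obtain ⟨M, hM⟩ : ∃ M, D.μ (Tinf \ Tow M) < ENNReal.ofReal (ε/2) :=
    (hrem.eventually (gt_mem_nhds (ENNReal.ofReal_pos.mpr hhalf))).exists
  -- the Rokhlin base
  set A : Set X := ⋃ n ∈ Finset.range (M+1),
      ⋃ j ∈ (Finset.range n).filter (fun j => (N+1) ∣ j ∧ j + N < n), D.flr B n j with hAdef
  have hAcl : IsClopen A := isClopen_biUnion_finset fun n _ =>
    isClopen_biUnion_finset fun j _ => D.isClopen_flr hBcl n j
  have hmemA : ∀ i : ℕ, ∀ x, (x ∈ D.itE (-(i:ℤ)) ⁻¹' A ↔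
      ∃ n, n < M+1 ∧ ∃ j, (N+1) ∣ j ∧ j + N < n ∧ x ∈ D.flr B n (j + i)) := by
    intro i x
    simp only [hAdef, Set.mem_preimage, Set.mem_iUnion, Finset.mem_filter,
      Finset.mem_range, exists_prop]
    constructor
    · rintro ⟨n, hn, j, ⟨hjr, hdvd, hjN⟩, hx⟩
      refine ⟨n, hn, j, hdvd, hjN, ?_⟩
      rw [← D.preimage_flr]
      exact hx
    · rintro ⟨n, hn, j, hdvd, hjN, hx⟩
      refine ⟨n, hn, j, ⟨by omega, hdvd, hjN⟩, ?_⟩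
      rw [← Set.mem_preimage, D.preimage_flr]
      exact hx
  have hdisj : ∀ i j : ℕ, i ≤ N → j ≤ N → i ≠ j →
      Disjoint (D.itE (-(i:ℤ)) ⁻¹' A) (D.itE (-(j:ℤ)) ⁻¹' A) := by
    intro i j hi hj hij
    rw [Set.disjoint_left]
    intro x hxi hxj
    obtain ⟨n, hn, p, hpd, hpN, hxp⟩ := (hmemA i x).mp hxi
    obtain ⟨n', hn', p', hpd', hpN', hxp'⟩ := (hmemA j x).mp hxj
    have h := D.flr_eq_of_mem (B := B) (show p + i < n by omega)
      (show p' + j < n' by omega) hxp hxp'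
    obtain ⟨t, rfl⟩ := hpd
    obtain ⟨t', rfl⟩ := hpd'
    have heq : (N+1) * t + i = (N+1) * t' + j := h.2
    have hieqj : i = j := by
      have h1 : ((N+1) * t + i) % (N+1) = i := by
        rw [Nat.mul_add_mod, Nat.mod_eq_of_lt (by omega)]
      have h2 : ((N+1) * t' + j) % (N+1) = j := by
        rw [Nat.mul_add_mod, Nat.mod_eq_of_lt (by omega)]
      rw [← h1, heq, h2]
    exact hij hieqj
  refine ⟨A, hAcl, ?_, ?_⟩
  · intro i j hi hj hij
    rw [himg, himg]
    exact hdisj i j hi hj hij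
  · have hcov : Set.univ \ ⋃ i ∈ Finset.range (N+1), (fun x => D.iter (i:ℤ) x) '' A ⊆
        (Tinf \ Tow M) ∪
        ((Set.univ \ Tinf) ∪ ⋃ k ∈ Finset.Icc 1 N, D.itE (k:ℤ) ⁻¹' B) := by
      intro x hx
      obtain ⟨-, hxA⟩ := hx
      by_cases hxT : x ∈ Tinf
      · by_cases hxM : x ∈ Tow M
        · right; right
          obtain ⟨n, hnM, hx2⟩ := Set.mem_iUnion₂.mp hxM
          obtain ⟨m, hmn, hxm⟩ := Set.mem_iUnion₂.mp hx2
          rw [Finset.mem_range] at hnM hmn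
          have hdm : (N+1) * (m / (N+1)) + m % (N+1) = m := Nat.div_add_mod m (N+1)
          set q := m / (N+1) with hq
          set i := m % (N+1) with hi
          have hiN : i ≤ N := by
            have := Nat.mod_lt m (show 0 < N+1 by omega)
            omega
          by_cases hcase : (N+1) * q + N < n
          · exfalso
            apply hxA
            refine Set.mem_iUnion₂.mpr ⟨i, Finset.mem_range.mpr (by omega), ?_⟩
            rw [himg]
            refine (hmemA i x).mpr ⟨n, by omega, (N+1)*q, dvd_mul_right _ _, hcase, ?_⟩
            rw [show (N+1)*q + i = m from hdm]
            exact hxm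
          · refine Set.mem_iUnion₂.mpr ⟨n - m, Finset.mem_Icc.mpr ⟨by omega, by omega⟩, ?_⟩
            have hb : D.itE (-(m:ℤ)) x ∈ D.ret B n := hxm
            have hB2 : D.itE ((n:ℕ):ℤ) (D.itE (-(m:ℤ)) x) ∈ B := (D.mem_ret.mp hb).2.1
            have hexp : ((n:ℕ):ℤ) + -(m:ℤ) = (((n - m : ℕ)):ℤ) := by omega
            rw [← DynSys.itE_add_apply, hexp] at hB2
            exact hB2
        · left; exact ⟨hxT, hxM⟩
      · right; left; exact ⟨Set.mem_univ x, hxT⟩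
    have hE2 : D.μ (Set.univ \ Tinf) = 0 := by
      rw [← Set.compl_eq_univ_diff]
      exact (prob_compl_eq_zero_iff hTinfmeas).mpr htow
    have hE3 : D.μ (⋃ k ∈ Finset.Icc 1 N, D.itE (k:ℤ) ⁻¹' B) ≤ ENNReal.ofReal (ε/2) := by
      refine le_trans (measure_biUnion_finset_le _ _) ?_
      calc ∑ k ∈ Finset.Icc 1 N, D.μ (D.itE (k:ℤ) ⁻¹' B)
          ≤ ∑ _k ∈ Finset.Icc 1 N, ENNReal.ofReal ε' :=
            Finset.sum_le_sum fun k hk => (hBsmall k hk).le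
        _ = (N : ENNReal) * ENNReal.ofReal ε' := by
            rw [Finset.sum_const, Nat.card_Icc]
            simp [nsmul_eq_mul]
        _ = ENNReal.ofReal (N * ε') := by
            rw [← ENNReal.ofReal_natCast N, ← ENNReal.ofReal_mul (by positivity)]
        _ = ENNReal.ofReal (ε/2) := by
            have hNne : (N:ℝ) ≠ 0 := Nat.cast_ne_zero.mpr (by omega)
            congr 1
            rw [hε'def]
            field_simp
    calc D.μ (Set.univ \ ⋃ i ∈ Finset.range (N+1), (fun x => D.iter (i:ℤ) x) '' A)
        ≤ D.μ ((Tinf \ Tow M) ∪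
            ((Set.univ \ Tinf) ∪ ⋃ k ∈ Finset.Icc 1 N, D.itE (k:ℤ) ⁻¹' B)) :=
          measure_mono hcov
      _ ≤ D.μ (Tinf \ Tow M) +
            (D.μ (Set.univ \ Tinf) + D.μ (⋃ k ∈ Finset.Icc 1 N, D.itE (k:ℤ) ⁻¹' B)) :=
          le_trans (measure_union_le _ _) (by gcongr; exact measure_union_le _ _)
      _ = D.μ (Tinf \ Tow M) + D.μ (⋃ k ∈ Finset.Icc 1 N, D.itE (k:ℤ) ⁻¹' B) := by
          rw [hE2, zero_add]
      _ < ENNReal.ofReal (ε/2) + ENNReal.ofReal (ε/2) :=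
          ENNReal.add_lt_add_of_lt_of_le (lt_of_le_of_lt hE3 ENNReal.ofReal_lt_top).ne hM hE3
      _ = ENNReal.ofReal ε := by
          rw [← ENNReal.ofReal_add hhalf.le hhalf.le, add_halves]
end
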